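/- arXiv:1205.4567 — 7 statements merged into one kernel-verified Lean document; each statement's English description precedes it below -/
import Mathlib

section
/- Let ω = e^{2πi/3}. Every nonzero zero of the exponential polynomial Δ(ρ) = e^{iρ} + ω e^{iωρ} + ω² e^{iω²ρ} satisfies: ρ, ωρ, or ω²ρ lies on the positive imaginary axis; more precisely, the zeros on the positive imaginary axis form a sequence σ_k with -iσ_k = (2π/√3)(k + 1/6) + O(e^{-√3 π k}) as k → ∞. -/
open Filter Asymptotics
open scoped Real
set_option maxHeartbeats 1000000

lemma cexp_re_im (a b : ℝ) : Complex.exp (↑a + ↑b * Complex.I)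
    = ↑(Real.exp a) * (↑(Real.cos b) + ↑(Real.sin b) * Complex.I) := by
  rw [Complex.exp_add, Complex.exp_mul_I, Complex.ofReal_exp, Complex.ofReal_cos,
    Complex.ofReal_sin]

lemma omega_form (ω : ℂ) (hω : ω = Complex.exp (2 * π * Complex.I / 3)) :
    ω = ↑(-1/2 : ℝ) + ↑(Real.sqrt 3 / 2 : ℝ) * Complex.I := by
  rw [hω, show (2 * (π:ℂ) * Complex.I / 3 : ℂ) = ((2*π/3 : ℝ) : ℂ) * Complex.I by
    push_cast; ring, Complex.exp_mul_I, ← Complex.ofReal_cos, ← Complex.ofReal_sin]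
  rw [show (2*π/3 : ℝ) = π - π/3 by ring, Real.cos_pi_sub, Real.sin_pi_sub,
    Real.cos_pi_div_three, Real.sin_pi_div_three]
  push_cast
  ring

lemma omega_sq_form (ω : ℂ) (hω : ω = Complex.exp (2 * π * Complex.I / 3)) :
    ω^2 = ↑(-1/2 : ℝ) + ↑(-(Real.sqrt 3 / 2) : ℝ) * Complex.I := by
  have h3 : ((Real.sqrt 3 : ℝ) : ℂ)^2 = 3 := by
    norm_cast
    exact Real.sq_sqrt (by norm_num)
  rw [omega_form ω hω]
  push_cast
  linear_combination (Complex.I^2/4) * h3 + (3/4) * Complex.I_sq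

lemma core (ω : ℂ) (hω : ω = Complex.exp (2 * π * Complex.I / 3)) (s t : ℝ)
    (ht : 0 < t) (hs : s ≠ 0)
    (h : Complex.exp (Complex.I * ((s:ℂ) + (t:ℂ) * Complex.I))
      + ω * Complex.exp (Complex.I * ω * ((s:ℂ) + (t:ℂ) * Complex.I))
      + ω^2 * Complex.exp (Complex.I * ω^2 * ((s:ℂ) + (t:ℂ) * Complex.I)) = 0) : False := by
  have hw := omega_form ω hω
  have hw2 := omega_sq_form ω hω
  set r := Real.sqrt 3 with hrdef
  have hr3 : r^2 = 3 := Real.sq_sqrt (by norm_num)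
  have hrpos : 0 < r := Real.sqrt_pos.2 (by norm_num)
  rw [show Complex.I * ((s:ℂ) + (t:ℂ) * Complex.I) = ↑(-t) + ↑s * Complex.I by
      push_cast; linear_combination (t:ℂ) * Complex.I_sq] at h
  rw [show Complex.I * ω * ((s:ℂ) + (t:ℂ) * Complex.I)
      = ↑(t/2 - r*s/2) + ↑(-(r*t/2) - s/2) * Complex.I by
      rw [hw]; push_cast
      linear_combination ((-(t:ℂ) + (r:ℝ)*(s:ℝ) + (r:ℝ)*(t:ℝ)*Complex.I)/2) * Complex.I_sq] at h
  rw [show Complex.I * ω^2 * ((s:ℂ) + (t:ℂ) * Complex.I)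
      = ↑(t/2 + r*s/2) + ↑(r*t/2 - s/2) * Complex.I by
      rw [hw2]; push_cast
      linear_combination ((-(t:ℂ) - (r:ℝ)*(s:ℝ) - (r:ℝ)*(t:ℝ)*Complex.I)/2) * Complex.I_sq] at h
  rw [cexp_re_im, cexp_re_im, cexp_re_im, hw2, hw] at h
  have e1c : Real.cos (-(r*t/2) - s/2)
      = Real.cos (r*t/2)*Real.cos (s/2) - Real.sin (r*t/2)*Real.sin (s/2) := by
    rw [show -(r*t/2) - s/2 = -(r*t/2 + s/2) by ring, Real.cos_neg, Real.cos_add]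
  have e1s : Real.sin (-(r*t/2) - s/2)
      = -(Real.sin (r*t/2)*Real.cos (s/2) + Real.cos (r*t/2)*Real.sin (s/2)) := by
    rw [show -(r*t/2) - s/2 = -(r*t/2 + s/2) by ring, Real.sin_neg, Real.sin_add]
  have e2c : Real.cos (r*t/2 - s/2)
      = Real.cos (r*t/2)*Real.cos (s/2) + Real.sin (r*t/2)*Real.sin (s/2) := by
    rw [Real.cos_sub]
  have e2s : Real.sin (r*t/2 - s/2)
      = Real.sin (r*t/2)*Real.cos (s/2) - Real.cos (r*t/2)*Real.sin (s/2) := by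
    rw [Real.sin_sub]
  have ecs : Real.cos s = Real.cos (s/2)^2 - Real.sin (s/2)^2 := by
    have h2 := Real.cos_add (s/2) (s/2)
    rw [show s/2 + s/2 = s by ring] at h2
    linear_combination h2
  have ess : Real.sin s = 2*Real.sin (s/2)*Real.cos (s/2) := by
    have h2 := Real.sin_add (s/2) (s/2)
    rw [show s/2 + s/2 = s by ring] at h2
    linear_combination h2
  have hre := congrArg Complex.re h
  have him := congrArg Complex.im h
  simp only [Complex.add_re, Complex.add_im, Complex.mul_re, Complex.mul_im,
    Complex.ofReal_re, Complex.ofReal_im, Complex.I_re, Complex.I_im,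
    Complex.zero_re, Complex.zero_im] at hre him
  rw [e1c, e1s, e2c, e2s, ecs, ess] at hre him
  set c1 := Real.cos (s/2) with hc1def
  set s1 := Real.sin (s/2) with hs1def
  set c2 := Real.cos (r*t/2) with hc2def
  set s2 := Real.sin (r*t/2) with hs2def
  set E0 := Real.exp (-t) with hE0def
  set Ea := Real.exp (t/2 - r*s/2) with hEadef
  set Eb := Real.exp (t/2 + r*s/2) with hEbdef
  have hp1 : c1^2 + s1^2 = 1 := by
    rw [hc1def, hs1def, add_comm]; exact Real.sin_sq_add_cos_sq _
  have hp2 : c2^2 + s2^2 = 1 := by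
    rw [hc2def, hs2def, add_comm]; exact Real.sin_sq_add_cos_sq _
  have hE : E0 * (Ea * Eb) = 1 := by
    rw [hE0def, hEadef, hEbdef, ← Real.exp_add, ← Real.exp_add,
      show -t + (t/2 - r*s/2 + (t/2 + r*s/2)) = 0 by ring, Real.exp_zero]
  have hU : (Eb^2 - Ea^2)*c2
      = E0/2*((Eb-Ea)*(c1^3 - 3*c1*s1^2) + r*(Ea+Eb)*(3*c1^2*s1 - s1^3)) := by
    linear_combination (((Ea-Eb)*c1 - r*(Ea+Eb)*s1)/2) * hre
      - (((Ea-Eb)*s1 + r*(Ea+Eb)*c1)/2) * him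
      + ((Ea^2-Eb^2)*(s1^2+c1^2)*c2/4) * hr3 + ((Ea^2-Eb^2)*c2) * hp1
  have hV : (Eb^2 - Ea^2)*s2
      = E0/2*(r*(Ea-Eb)*(c1^3 - 3*c1*s1^2) + (Ea+Eb)*(3*c1^2*s1 - s1^3)) := by
    linear_combination (-(((Ea+Eb)*s1 + r*(Ea-Eb)*c1))/2) * hre
      + ((-((Ea+Eb)*c1) + r*(Ea-Eb)*s1)/2) * him
      + ((Ea^2-Eb^2)*(s1^2+c1^2)*s2/4) * hr3 + ((Ea^2-Eb^2)*s2) * hp1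
  clear h hre him hw hw2
  have hC3 : Real.cos (3*(s/2)) = c1^3 - 3*c1*s1^2 := by
    have h2 := Real.cos_three_mul (s/2)
    linear_combination h2 + 3*c1*hp1
  have hS3 : Real.sin (3*(s/2)) = 3*c1^2*s1 - s1^3 := by
    have h2 := Real.sin_three_mul (s/2)
    linear_combination h2 - 3*s1*hp1
  set C3 := Real.cos (3*(s/2)) with hC3def
  set S3 := Real.sin (3*(s/2)) with hS3def
  have hU' : (Eb^2 - Ea^2)*c2 = E0/2*((Eb-Ea)*C3 + r*(Ea+Eb)*S3) := by
    rw [hC3, hS3]; exact hU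
  have hV' : (Eb^2 - Ea^2)*s2 = E0/2*(r*(Ea-Eb)*C3 + (Ea+Eb)*S3) := by
    rw [hC3, hS3]; exact hV
  have hp3 : C3^2 + S3^2 = 1 := by
    rw [hC3def, hS3def, add_comm]; exact Real.sin_sq_add_cos_sq _
  have heq : (Eb^2 - Ea^2)^2 = E0^2*(Eb-Ea)^2 + 4*E0*S3^2 := by
    linear_combination ((Eb^2-Ea^2)*c2 + E0/2*((Eb-Ea)*C3 + r*(Ea+Eb)*S3)) * hU'
      + ((Eb^2-Ea^2)*s2 + E0/2*(r*(Ea-Eb)*C3 + (Ea+Eb)*S3)) * hV'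
      + (-(Eb^2-Ea^2)^2) * hp2
      + ((1+r^2)/4*E0^2*(Ea-Eb)^2) * hp3
      + (E0^2*(Eb-Ea)^2/4 + E0^2*(Ea*Eb)*S3^2) * hr3
      + (4*E0*S3^2) * hE
  clear hU hV hU' hV' hC3 hS3 hp1 hp2 hp3 e1c e1s e2c e2s ecs ess
  -- final contradiction
  have hE0pos : 0 < E0 := by rw [hE0def]; exact Real.exp_pos _
  have hE0lt : E0 < 1 := by
    rw [hE0def]; exact Real.exp_lt_one_iff.2 (by linarith)
  have hEapos : 0 < Ea := by rw [hEadef]; exact Real.exp_pos _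
  have hEbpos : 0 < Eb := by rw [hEbdef]; exact Real.exp_pos _
  have hEane : Ea ≠ Eb := by
    rw [hEadef, hEbdef, Ne, Real.exp_eq_exp]
    intro hq
    have : r * s = 0 := by linarith
    rcases mul_eq_zero.1 this with h' | h'
    · exact absurd h' (ne_of_gt hrpos)
    · exact hs h'
  have hS3b : S3^2 ≤ 9/4*s^2 := by
    have := Real.sin_sq_le_sq (x := 3*(s/2))
    rw [← hS3def] at this
    nlinarith [this]
  have hsinh : 3*s^2*(Ea*Eb) ≤ (Eb - Ea)^2 := by
    have hEb' : Eb = Real.exp (t/2) * Real.exp (r*s/2) := by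
      rw [hEbdef, ← Real.exp_add]
    have hEa' : Ea = Real.exp (t/2) * Real.exp (-(r*s/2)) := by
      rw [hEadef, ← Real.exp_add, show t/2 + -(r*s/2) = t/2 - r*s/2 by ring]
    have hx : r*s/2 ≠ 0 := by
      intro h'
      apply hs
      have h'' : r * s = 0 := by linarith
      rcases mul_eq_zero.1 h'' with h3 | h3
      · exact absurd h3 (ne_of_gt hrpos)
      · exact h3
    have hsh : (r*s/2)^2 ≤ Real.sinh (r*s/2)^2 := by
      have h1 : |r*s/2| < Real.sinh |r*s/2| := Real.self_lt_sinh_iff.2 (abs_pos.2 hx)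
      rw [← Real.abs_sinh] at h1
      have h2 : |r*s/2|^2 ≤ |Real.sinh (r*s/2)|^2 := by
        apply pow_le_pow_left₀ (abs_nonneg _) h1.le
      rwa [sq_abs, sq_abs] at h2
    have hXY : Real.exp (r*s/2) * Real.exp (-(r*s/2)) = 1 := by
      rw [← Real.exp_add]; simp
    have hid : (Eb - Ea)^2 = (Ea*Eb)*(4*Real.sinh (r*s/2)^2) := by
      rw [hEb', hEa', Real.sinh_eq]
      linear_combination (-(Real.exp (t/2))^2*(Real.exp (r*s/2) - Real.exp (-(r*s/2)))^2) * hXY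
    have h10 : 4*(r*s/2)^2 = 3*s^2 := by linear_combination s^2*hr3
    have hEEpos : (0:ℝ) ≤ Ea*Eb := by positivity
    rw [hid]
    nlinarith [mul_le_mul_of_nonneg_left (by linarith [hsh, h10] : 3*s^2 ≤ 4*Real.sinh (r*s/2)^2) hEEpos]
  have hdpos : 0 < (Eb - Ea)^2 := by
    have : Eb - Ea ≠ 0 := fun h' => hEane (by linarith)
    positivity
  -- assemble the contradiction
  have h4 : 4*E0*S3^2 ≤ 9*E0*s^2 := by nlinarith [hS3b, hE0pos]
  have e5 : 3*E0^2*(3*s^2*(Ea*Eb)) = 9*E0*s^2 := by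
    linear_combination (9*E0*s^2)*hE
  have h5 : 9*E0*s^2 ≤ 3*E0^2*(Eb-Ea)^2 := by
    have := mul_le_mul_of_nonneg_left hsinh (by positivity : (0:ℝ) ≤ 3*E0^2)
    linarith [e5]
  have h6 : (Eb^2-Ea^2)^2 = 4*(Ea*Eb)*(Eb-Ea)^2 + (Eb-Ea)^4 := by ring
  have h7 : 4*(Ea*Eb)*(Eb-Ea)^2 ≤ 4*E0^2*(Eb-Ea)^2 := by
    nlinarith [heq, h4, h5, sq_nonneg ((Eb-Ea)^2)]
  have h8 : Ea*Eb ≤ E0^2 := by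
    have := (mul_le_mul_iff_of_pos_right hdpos).1 h7
    linarith
  nlinarith [mul_le_mul_of_nonneg_left h8 hE0pos.le, hE, hE0lt, hE0pos,
    mul_pos hE0pos hE0pos]

noncomputable def ffun (u : ℝ) : ℝ :=
  Real.exp (-u) + Real.exp (u/2) *
    (Real.sqrt 3 * Real.sin (Real.sqrt 3*u/2) - Real.cos (Real.sqrt 3*u/2))

noncomputable def uu (k : ℕ) : ℝ := (2 * π / Real.sqrt 3) * ((k : ℝ) + 1 / 6)

lemma fcont : Continuous ffun := by
  unfold ffun
  fun_prop

lemma trig_id (y : ℝ) :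
    Real.sqrt 3 * Real.sin (π/6 + y) - Real.cos (π/6 + y) = 2*Real.sin y := by
  have h3 : Real.sqrt 3 * Real.sqrt 3 = 3 := Real.mul_self_sqrt (by norm_num)
  rw [Real.sin_add, Real.cos_add, Real.sin_pi_div_six, Real.cos_pi_div_six]
  linear_combination (Real.sin y/2) * h3

lemma ffun_shift (k : ℕ) (d : ℝ) :
    ffun (uu k + d) = Real.exp (-(uu k + d))
      + Real.exp ((uu k + d)/2) * ((-1:ℝ)^k * (2*Real.sin (Real.sqrt 3*d/2))) := by
  have hr0 : Real.sqrt 3 ≠ 0 := by positivity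
  have hang : Real.sqrt 3*(uu k + d)/2 = (π/6 + Real.sqrt 3*d/2) + (k:ℕ)*π := by
    unfold uu
    field_simp
    ring
  unfold ffun
  rw [hang, Real.sin_add_nat_mul_pi, Real.cos_add_nat_mul_pi]
  linear_combination (Real.exp ((uu k + d)/2) * (-1:ℝ)^k) * trig_id (Real.sqrt 3*d/2)

lemma exp_le_inv_one_sub {x : ℝ} (h0 : 0 ≤ x) (h1 : x < 1) : Real.exp x ≤ 1/(1-x) := by
  have h2 : 1 - x ≤ Real.exp (-x) := by
    have := Real.add_one_le_exp (-x)
    linarith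
  have h3 : Real.exp x * (1-x) ≤ 1 := by
    calc Real.exp x * (1-x) ≤ Real.exp x * Real.exp (-x) := by
          apply mul_le_mul_of_nonneg_left h2 (Real.exp_pos _).le
      _ = 1 := by rw [← Real.exp_add]; simp
  rw [le_div_iff₀ (by linarith)]
  exact h3

lemma exists_zero (k : ℕ) (hk : 1 ≤ k) :
    ∃ x : ℝ, ffun x = 0 ∧ 3 ≤ x ∧ |x - uu k| ≤ 2*Real.exp (-(3/2)*uu k) := by
  have h3 : Real.sqrt 3 * Real.sqrt 3 = 3 := Real.mul_self_sqrt (by norm_num)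
  have hrpos : 0 < Real.sqrt 3 := by positivity
  have hr17 : 1.7 ≤ Real.sqrt 3 := by nlinarith [h3, hrpos]
  have hr18 : Real.sqrt 3 ≤ 1.8 := by nlinarith [h3, hrpos]
  have hπ : 3.14 ≤ π := by linarith [Real.pi_gt_d6]
  have hk1 : (1:ℝ) ≤ (k:ℝ) := by exact_mod_cast hk
  have hc : (3.48:ℝ) ≤ 2*π/Real.sqrt 3 := by
    rw [le_div_iff₀ hrpos]
    nlinarith
  have hu4 : 4 ≤ uu k := by
    have h7 : (7/6:ℝ) ≤ (k:ℝ) + 1/6 := by linarith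
    have h' : (3.48:ℝ)*(7/6) ≤ (2*π/Real.sqrt 3)*((k:ℝ)+1/6) :=
      mul_le_mul hc h7 (by norm_num) (by linarith)
    unfold uu
    nlinarith
  set δ := 2*Real.exp (-(3/2)*uu k) with hδdef
  have hδpos : 0 < δ := by positivity
  have hexp6 : Real.exp (-(3/2)*uu k) ≤ Real.exp (-6) := by
    apply Real.exp_le_exp.2; linarith
  have h64 : (64:ℝ) ≤ Real.exp 6 := by
    have h2 : (2:ℝ) ≤ Real.exp 1 := by linarith [Real.exp_one_gt_d9]
    calc (64:ℝ) = 2^6 := by norm_num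
      _ ≤ Real.exp 1^6 := by apply pow_le_pow_left₀ (by norm_num) h2
      _ = Real.exp ((6:ℕ)*(1:ℝ)) := (Real.exp_nat_mul 1 6).symm
      _ = Real.exp 6 := by norm_num
  have he6 : Real.exp (-6) ≤ 1/64 := by
    rw [Real.exp_neg]
    rw [inv_le_comm₀ (Real.exp_pos _) (by norm_num)]
    simpa using h64
  have hδ32 : δ ≤ 1/32 := by rw [hδdef]; linarith
  -- lower bound for sin at √3*δ/2
  have hxpos : 0 < Real.sqrt 3*δ/2 := by positivity
  have hxle : Real.sqrt 3*δ/2 ≤ 1 := by nlinarith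
  have hsinlb : 3/4*(Real.sqrt 3*δ/2) ≤ Real.sin (Real.sqrt 3*δ/2) := by
    have h := Real.sin_gt_sub_cube hxpos
    have hx2 : (Real.sqrt 3*δ/2)^2 ≤ 1 := by nlinarith
    have hx3 : (Real.sqrt 3*δ/2)^3 ≤ (Real.sqrt 3*δ/2) := by
      nlinarith [mul_le_mul_of_nonneg_left hx2 hxpos.le]
    linarith
  have hsinub : 0 < Real.sin (Real.sqrt 3*δ/2) := by nlinarith
  -- key endpoint estimate
  have hkey : ∀ d : ℝ, |d| ≤ δ →
      Real.exp (-(uu k + d)) < Real.exp ((uu k + d)/2) * (2*Real.sin (Real.sqrt 3*δ/2)) := by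
    intro d hd
    have habs := abs_le.1 hd
    have hA : 0 < Real.exp (δ/2) := Real.exp_pos _
    have he5 : Real.exp (3*δ/2) ≤ 64/61 := by
      calc Real.exp (3*δ/2) ≤ Real.exp (3/64) := by
            apply Real.exp_le_exp.2; linarith
        _ ≤ 1/(1-3/64) := exp_le_inv_one_sub (by norm_num) (by norm_num)
        _ = 64/61 := by norm_num
    have h3δ : Real.exp (3*δ/2) < 3*Real.sqrt 3/2 := by nlinarith
    have hfinal : Real.exp δ < 3*Real.sqrt 3/2 * Real.exp (-(δ/2)) := by
      rw [← mul_lt_mul_iff_left₀ hA]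
      have hmul : Real.exp δ * Real.exp (δ/2) = Real.exp (3*δ/2) := by
        rw [← Real.exp_add]; congr 1; ring
      have hmul2 : Real.exp (-(δ/2)) * Real.exp (δ/2) = 1 := by
        rw [← Real.exp_add]; simp
      rw [hmul, mul_assoc, hmul2, mul_one]
      exact h3δ
    have e1 : Real.exp (-(uu k + d)) ≤ Real.exp (-uu k) * Real.exp δ := by
      rw [← Real.exp_add]
      apply Real.exp_le_exp.2; linarith
    have m1 : Real.exp (-(δ/2)) * Real.exp (-uu k)
        = Real.exp ((uu k - δ)/2) * Real.exp (-(3/2)*uu k) := by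
      rw [← Real.exp_add, ← Real.exp_add]; congr 1; ring
    have s1 : 3*Real.sqrt 3/2 * Real.exp (-(δ/2)) * Real.exp (-uu k)
        = Real.exp ((uu k - δ)/2) * (2*(3/4*(Real.sqrt 3*δ/2))) := by
      linear_combination (3*Real.sqrt 3/2) * m1
        + (3*Real.sqrt 3/4*Real.exp ((uu k - δ)/2)) * hδdef
    have e2 : Real.exp ((uu k - δ)/2) ≤ Real.exp ((uu k + d)/2) := by
      apply Real.exp_le_exp.2; linarith
    calc Real.exp (-(uu k + d)) ≤ Real.exp (-uu k) * Real.exp δ := e1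
      _ < Real.exp (-uu k) * (3*Real.sqrt 3/2 * Real.exp (-(δ/2))) := by
          exact mul_lt_mul_of_pos_left hfinal (Real.exp_pos _)
      _ = 3*Real.sqrt 3/2 * Real.exp (-(δ/2)) * Real.exp (-uu k) := by ring
      _ = Real.exp ((uu k - δ)/2) * (2*(3/4*(Real.sqrt 3*δ/2))) := s1
      _ ≤ Real.exp ((uu k + d)/2) * (2*Real.sin (Real.sqrt 3*δ/2)) := by
          apply mul_le_mul e2 (by linarith) (by positivity) (Real.exp_pos _).le
  have hmid : ffun (uu k) = Real.exp (-(uu k)) := by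
    have h := ffun_shift k 0
    simp only [add_zero, mul_zero, zero_div, Real.sin_zero] at h
    rw [h]
  have hmidpos : 0 < ffun (uu k) := by rw [hmid]; exact Real.exp_pos _
  rcases Nat.even_or_odd k with hpar | hpar
  · -- even k
    have hm1 : ((-1:ℝ))^k = 1 := hpar.neg_one_pow
    have hleft : ffun (uu k - δ) < 0 := by
      have hsh := ffun_shift k (-δ)
      rw [hm1, show Real.sqrt 3*(-δ)/2 = -(Real.sqrt 3*δ/2) by ring, Real.sin_neg] at hsh
      rw [show uu k - δ = uu k + -δ by ring, hsh]
      have hkk := hkey (-δ) (by rw [abs_neg, abs_of_pos hδpos])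
      nlinarith [hkk]
    obtain ⟨x, hxIcc, hfx⟩ := intermediate_value_Icc (by linarith : uu k - δ ≤ uu k)
      fcont.continuousOn ⟨hleft.le, hmidpos.le⟩
    exact ⟨x, hfx, by linarith [hxIcc.1, hxIcc.2],
      abs_le.2 ⟨by linarith [hxIcc.1], by linarith [hxIcc.2]⟩⟩
  · -- odd k
    have hm1 : ((-1:ℝ))^k = -1 := hpar.neg_one_pow
    have hright : ffun (uu k + δ) < 0 := by
      have hsh := ffun_shift k δ
      rw [hm1] at hsh
      rw [hsh]
      have hkk := hkey δ (by rw [abs_of_pos hδpos])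
      nlinarith [hkk]
    obtain ⟨x, hxIcc, hfx⟩ := intermediate_value_Icc' (by linarith : uu k ≤ uu k + δ)
      fcont.continuousOn ⟨hright.le, hmidpos.le⟩
    exact ⟨x, hfx, by linarith [hxIcc.1, hxIcc.2],
      abs_le.2 ⟨by linarith [hxIcc.1], by linarith [hxIcc.2]⟩⟩

lemma omega_cube (ω : ℂ) (hω : ω = Complex.exp (2 * π * Complex.I / 3)) : ω^3 = 1 := by
  rw [hω, ← Complex.exp_nat_mul, show ((3:ℕ):ℂ) * (2 * ↑π * Complex.I / 3) = 2*↑π*Complex.I by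
    push_cast; ring, Complex.exp_two_pi_mul_I]

-- new material
lemma re_eq_zero (ω : ℂ) (hω : ω = Complex.exp (2 * π * Complex.I / 3)) (ρ : ℂ)
    (himpos : 0 < ρ.im)
    (h : Complex.exp (Complex.I * ρ) + ω * Complex.exp (Complex.I * ω * ρ)
      + ω^2 * Complex.exp (Complex.I * ω^2 * ρ) = 0) : ρ.re = 0 := by
  by_contra hre
  apply core ω hω ρ.re ρ.im himpos hre
  rw [show ((ρ.re:ℂ) + (ρ.im:ℂ)*Complex.I) = ρ from Complex.re_add_im ρ]
  exact h

lemma rot (ω : ℂ) (hω : ω = Complex.exp (2 * π * Complex.I / 3)) (ρ : ℂ)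
    (h : Complex.exp (Complex.I * ρ) + ω * Complex.exp (Complex.I * ω * ρ)
      + ω^2 * Complex.exp (Complex.I * ω^2 * ρ) = 0) :
    Complex.exp (Complex.I * (ω*ρ)) + ω * Complex.exp (Complex.I * ω * (ω*ρ))
      + ω^2 * Complex.exp (Complex.I * ω^2 * (ω*ρ)) = 0 := by
  have hw3 := omega_cube ω hω
  rw [show Complex.I * (ω*ρ) = Complex.I*ω*ρ by ring,
      show Complex.I * ω * (ω*ρ) = Complex.I*ω^2*ρ by ring,
      show Complex.I * ω^2 * (ω*ρ) = Complex.I*ρ by linear_combination Complex.I*ρ*hw3]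
  linear_combination ω^2 * h - (Complex.exp (Complex.I*ω*ρ) + ω*Complex.exp (Complex.I*ω^2*ρ)) * hw3

lemma val (ω : ℂ) (hω : ω = Complex.exp (2 * π * Complex.I / 3)) (u : ℝ) :
    Complex.exp (Complex.I * (Complex.I*(u:ℂ)))
      + ω * Complex.exp (Complex.I * ω * (Complex.I*(u:ℂ)))
      + ω^2 * Complex.exp (Complex.I * ω^2 * (Complex.I*(u:ℂ))) = ((ffun u : ℝ) : ℂ) := by
  have hw := omega_form ω hω
  have hw2 := omega_sq_form ω hω
  unfold ffun
  set r := Real.sqrt 3 with hrdef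
  rw [show Complex.I * (Complex.I*(u:ℂ)) = ((-u : ℝ):ℂ) + ((0:ℝ):ℂ)*Complex.I by
        push_cast; linear_combination (u:ℂ)*Complex.I_sq,
      show Complex.I * ω * (Complex.I*(u:ℂ)) = ((u/2 : ℝ):ℂ) + ((-(r*u/2) : ℝ):ℂ)*Complex.I by
        rw [hw]; push_cast
        linear_combination ((-(u:ℂ) + (r:ℝ)*(u:ℝ)*Complex.I)/2) * Complex.I_sq,
      show Complex.I * ω^2 * (Complex.I*(u:ℂ)) = ((u/2:ℝ):ℂ) + ((r*u/2 : ℝ):ℂ)*Complex.I by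
        rw [hw2]; push_cast
        linear_combination ((-(u:ℂ) - (r:ℝ)*(u:ℝ)*Complex.I)/2) * Complex.I_sq,
      cexp_re_im, cexp_re_im, cexp_re_im, hw2, hw]
  apply Complex.ext <;>
    simp [Complex.add_re, Complex.add_im, Complex.mul_re, Complex.mul_im,
      Real.cos_neg, Real.sin_neg, Real.cos_zero, Real.sin_zero] <;>
    ring

theorem stmt0 (ω : ℂ) (hω : ω = Complex.exp (2 * π * Complex.I / 3))
    (Δ : ℂ → ℂ)
    (hΔ : ∀ ρ, Δ ρ = Complex.exp (Complex.I * ρ) + ω * Complex.exp (Complex.I * ω * ρ)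
      + ω ^ 2 * Complex.exp (Complex.I * ω ^ 2 * ρ)) :
    (∀ ρ : ℂ, ρ ≠ 0 → Δ ρ = 0 →
      ∃ j < 3, (ω ^ j * ρ).re = 0 ∧ 0 < (ω ^ j * ρ).im) ∧
    ∃ σ : ℕ → ℂ, (∀ k, Δ (σ k) = 0 ∧ (σ k).re = 0 ∧ 0 < (σ k).im) ∧
      (fun k : ℕ => (-Complex.I * σ k)
          - (((2 * π / Real.sqrt 3) * ((k : ℝ) + 1 / 6) : ℝ) : ℂ))
        =O[atTop] fun k : ℕ => Real.exp (-(Real.sqrt 3) * π * (k : ℝ)) := by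
  have hw := omega_form ω hω
  have hw2 := omega_sq_form ω hω
  have hrpos : 0 < Real.sqrt 3 := by positivity
  have h3 : Real.sqrt 3 * Real.sqrt 3 = 3 := Real.mul_self_sqrt (by norm_num)
  constructor
  · -- part 1
    intro ρ hρ hz
    rw [hΔ] at hz
    by_cases h0 : 0 < ρ.im
    · refine ⟨0, by norm_num, ?_, ?_⟩
      · rw [pow_zero, one_mul]
        exact re_eq_zero ω hω ρ h0 hz
      · rw [pow_zero, one_mul]
        exact h0
    by_cases h1 : 0 < (ω*ρ).im
    · refine ⟨1, by norm_num, ?_, ?_⟩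
      · rw [pow_one]
        exact re_eq_zero ω hω (ω*ρ) h1 (rot ω hω ρ hz)
      · rw [pow_one]
        exact h1
    by_cases h2 : 0 < (ω^2*ρ).im
    · have hz2 := rot ω hω (ω*ρ) (rot ω hω ρ hz)
      rw [show ω*(ω*ρ) = ω^2*ρ by ring] at hz2
      exact ⟨2, by norm_num, re_eq_zero ω hω (ω^2*ρ) h2 hz2, h2⟩
    · exfalso
      push_neg at h0 h1 h2
      have hwre : ω.re = -1/2 := by rw [hw]; simp
      have hwim : ω.im = Real.sqrt 3/2 := by rw [hw]; simp
      have hw2re : (ω^2).re = -1/2 := by rw [hw2]; simp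
      have hw2im : (ω^2).im = -(Real.sqrt 3/2) := by rw [hw2]; simp
      have e1 : (ω*ρ).im = -1/2*ρ.im + Real.sqrt 3/2*ρ.re := by
        rw [Complex.mul_im, hwre, hwim]
      have e2 : (ω^2*ρ).im = -1/2*ρ.im - Real.sqrt 3/2*ρ.re := by
        rw [Complex.mul_im, hw2re, hw2im]; ring
      rw [e1] at h1
      rw [e2] at h2
      have hy : ρ.im = 0 := by linarith
      have hx : ρ.re = 0 := by nlinarith
      exact hρ (Complex.ext hx hy)
  · -- part 2
    have hex : ∀ k : ℕ, ∃ x : ℝ, ffun x = 0 ∧ 3 ≤ x ∧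
        (1 ≤ k → |x - uu k| ≤ 2*Real.exp (-(3/2)*uu k)) := by
      intro k
      match k with
      | 0 =>
        obtain ⟨x, hx0, hx3, _⟩ := exists_zero 1 le_rfl
        exact ⟨x, hx0, hx3, fun h => absurd h (by norm_num)⟩
      | (n+1) =>
        obtain ⟨x, hx0, hx3, hb⟩ := exists_zero (n+1) (Nat.succ_le_succ (Nat.zero_le n))
        exact ⟨x, hx0, hx3, fun _ => hb⟩
    choose σ' hf0 hf3 hfb using hex
    refine ⟨fun k => Complex.I * (σ' k : ℂ), fun k => ⟨?_, ?_, ?_⟩, ?_⟩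
    · rw [hΔ, val ω hω (σ' k), hf0 k, Complex.ofReal_zero]
    · simp
    · simp only [Complex.mul_im, Complex.I_re, Complex.I_im, Complex.ofReal_re,
        Complex.ofReal_im]
      have := hf3 k
      linarith
    · rw [Asymptotics.isBigO_iff]
      refine ⟨2, ?_⟩
      filter_upwards [Filter.eventually_ge_atTop 1] with k hk
      have hb := hfb k hk
      have hmono : Real.exp (-(3/2)*uu k) ≤ Real.exp (-Real.sqrt 3*π*(k:ℝ)) := by
        apply Real.exp_le_exp.2
        have hsuu : Real.sqrt 3 * (uu k) = π*(2*((k:ℝ)+1/6)) := by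
          unfold uu
          field_simp
        have huu : (3/2)*uu k = Real.sqrt 3*π*((k:ℝ)+1/6) := by
          linear_combination (Real.sqrt 3/2)*hsuu - (uu k/2)*h3
        nlinarith [Real.pi_pos, hrpos, Nat.cast_nonneg (α := ℝ) k]
      have hiden : -Complex.I*(Complex.I*((σ' k : ℝ):ℂ)) = ((σ' k : ℝ):ℂ) := by
        rw [← mul_assoc, neg_mul, Complex.I_mul_I, neg_neg, one_mul]
      have huuk : ((2 * π / Real.sqrt 3) * ((k:ℝ) + 1/6) : ℝ) = uu k := rfl
      rw [hiden, huuk, ← Complex.ofReal_sub, Complex.norm_real, Real.norm_eq_abs,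
        Real.norm_eq_abs, abs_of_pos (Real.exp_pos _)]
      calc |σ' k - uu k| ≤ 2*Real.exp (-(3/2)*uu k) := hb
        _ ≤ 2*Real.exp (-Real.sqrt 3*π*(k:ℝ)) := by linarith
end

section
/- If -iσ is purely imaginary with σ on the positive imaginary axis and e^{iσ} + ω e^{iωσ} + ω² e^{iω²σ} = 0 (ω = e^{2πi/3}), then the function φ(x) = Σ_{r=0}^{2} e^{iω^r σ x}(e^{iω^{r+2}σ} - e^{iω^{r+1}σ}) satisfies the ODE -iφ''' = σ³ φ on [0,1] (i.e., (-i d/dx)³ φ = σ³ φ) together with the boundary conditions φ(0) = 0, φ(1) = 0, and φ'(0) = 0. -/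
open scoped Real

lemma hasD (c k : ℂ) (x : ℝ) :
    HasDerivAt (fun t : ℝ => Complex.exp (c * t) * k) (Complex.exp (c * x) * (c * k)) x := by
  have h : HasDerivAt (fun z : ℂ => Complex.exp (c * z)) (Complex.exp (c * x) * c) (x : ℂ) := by
    have h0 := ((hasDerivAt_id (x : ℂ)).const_mul c).cexp
    simpa using h0
  simpa [mul_assoc] using (h.comp_ofReal).mul_const k

lemma key (c₀ c₁ c₂ k₀ k₁ k₂ : ℂ) : ∀ n : ℕ,
    iteratedDeriv n (fun t : ℝ => Complex.exp (c₀ * t) * k₀ + Complex.exp (c₁ * t) * k₁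
      + Complex.exp (c₂ * t) * k₂)
    = fun t : ℝ => Complex.exp (c₀ * t) * (c₀ ^ n * k₀) + Complex.exp (c₁ * t) * (c₁ ^ n * k₁)
      + Complex.exp (c₂ * t) * (c₂ ^ n * k₂)
  | 0 => by funext t; simp
  | (n + 1) => by
    rw [iteratedDeriv_succ, key c₀ c₁ c₂ k₀ k₁ k₂ n]
    funext t
    refine ((((hasD c₀ (c₀ ^ n * k₀) t).add (hasD c₁ (c₁ ^ n * k₁) t)).add
      (hasD c₂ (c₂ ^ n * k₂) t)).deriv).trans ?_
    ring

theorem stmt1 (ω σ : ℂ) (hω : ω = Complex.exp (2 * π * Complex.I / 3))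
    (hσre : σ.re = 0) (hσim : 0 < σ.im)
    (hzero : Complex.exp (Complex.I * σ) + ω * Complex.exp (Complex.I * ω * σ)
      + ω ^ 2 * Complex.exp (Complex.I * ω ^ 2 * σ) = 0)
    (φ : ℝ → ℂ)
    (hφ : ∀ x : ℝ, φ x = ∑ r ∈ Finset.range 3,
      Complex.exp (Complex.I * ω ^ r * σ * x) *
        (Complex.exp (Complex.I * ω ^ (r + 2) * σ) - Complex.exp (Complex.I * ω ^ (r + 1) * σ))) :
    (∀ x ∈ Set.Icc (0:ℝ) 1, (-Complex.I) ^ 3 * iteratedDeriv 3 φ x = σ ^ 3 * φ x) ∧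
    φ 0 = 0 ∧ φ 1 = 0 ∧ deriv φ 0 = 0 := by
  have hω3 : ω ^ 3 = 1 := by
    rw [hω, ← Complex.exp_nat_mul]
    convert Complex.exp_two_pi_mul_I using 2
    push_cast
    ring
  have e3 : Complex.I * ω ^ 3 * σ = Complex.I * σ := by rw [hω3]; ring
  have e4 : Complex.I * ω ^ 4 * σ = Complex.I * ω * σ := by
    have : ω ^ 4 = ω := by rw [pow_succ, hω3, one_mul]
    rw [this]
  set E0 := Complex.exp (Complex.I * σ) with hE0
  set E1 := Complex.exp (Complex.I * ω * σ) with hE1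
  set E2 := Complex.exp (Complex.I * ω ^ 2 * σ) with hE2
  have φeq : φ = fun t : ℝ => Complex.exp (Complex.I * σ * t) * (E2 - E1)
      + Complex.exp (Complex.I * ω * σ * t) * (E0 - E2)
      + Complex.exp (Complex.I * ω ^ 2 * σ * t) * (E1 - E0) := by
    funext t
    rw [hφ, Finset.sum_range_succ, Finset.sum_range_succ, Finset.sum_range_one]
    norm_num [e3, e4, hE0, hE1, hE2]
  have hI4 : Complex.I ^ 4 = 1 := by
    simp [pow_succ, Complex.I_mul_I]
  refine ⟨?_, ?_, ?_, ?_⟩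
  · intro x _
    rw [φeq, key]
    have hA : Complex.I * (Complex.I * σ) ^ 3 = σ ^ 3 := by
      linear_combination σ ^ 3 * hI4
    have hB : Complex.I * (Complex.I * ω * σ) ^ 3 = σ ^ 3 := by
      linear_combination σ ^ 3 * ω ^ 3 * hI4 + σ ^ 3 * hω3
    have hC : Complex.I * (Complex.I * ω ^ 2 * σ) ^ 3 = σ ^ 3 := by
      linear_combination σ ^ 3 * ω ^ 6 * hI4 + σ ^ 3 * (ω ^ 3 + 1) * hω3
    have hI3 : (-Complex.I) ^ 3 = Complex.I := by
      have : Complex.I ^ 2 = -1 := Complex.I_sq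
      linear_combination (-Complex.I) * this
    rw [hI3]
    linear_combination (Complex.exp (Complex.I * σ * x) * (E2 - E1)) * hA
      + (Complex.exp (Complex.I * ω * σ * x) * (E0 - E2)) * hB
      + (Complex.exp (Complex.I * ω ^ 2 * σ * x) * (E1 - E0)) * hC
  · rw [φeq]
    simp only [Complex.ofReal_zero, mul_zero, Complex.exp_zero, one_mul]
    ring
  · rw [φeq]
    simp only [Complex.ofReal_one, mul_one, ← hE0, ← hE1, ← hE2]
    ring
  · rw [φeq]
    refine ((((hasD (Complex.I * σ) (E2 - E1) 0).add (hasD (Complex.I * ω * σ) (E0 - E2) 0)).add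
      (hasD (Complex.I * ω ^ 2 * σ) (E1 - E0) 0)).deriv).trans ?_
    simp only [Complex.ofReal_zero, mul_zero, Complex.exp_zero, one_mul]
    linear_combination (Complex.I * σ * (ω - ω ^ 2)) * hzero
      + (Complex.I * σ * (E1 + (ω - 1) * E2)) * hω3
end

section
/- If σ is a nonzero zero of e^{iρ} + ω e^{iωρ} + ω² e^{iω²ρ} (ω = e^{2πi/3}), then ψ(x) = Σ_{r=0}^{2} e^{-iω^r σ x}(e^{-iω^{r+2}σ} - e^{-iω^{r+1}σ}) satisfies (-i d/dx)³ ψ = -σ³ ψ together with ψ(0) = ψ(1) = 0 and ψ'(1) = 0. -/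
open scoped Real

lemma hasDerivAt_combo (c A : ℂ) (x : ℝ) :
    HasDerivAt (fun x : ℝ => Complex.exp (c * x) * A) (Complex.exp (c * x) * (c * A)) x := by
  have h : HasDerivAt (fun x : ℝ => c * (x : ℂ)) c x := by
    simpa using ((hasDerivAt_id x).ofReal_comp.const_mul c)
  have := (h.cexp).mul_const A
  rw [← mul_assoc]
  exact this

lemma deriv_three (c₀ c₁ c₂ A₀ A₁ A₂ : ℂ) :
    deriv (fun x : ℝ => Complex.exp (c₀ * x) * A₀ + Complex.exp (c₁ * x) * A₁ + Complex.exp (c₂ * x) * A₂)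
      = fun x : ℝ => Complex.exp (c₀ * x) * (c₀ * A₀) + Complex.exp (c₁ * x) * (c₁ * A₁)
        + Complex.exp (c₂ * x) * (c₂ * A₂) := by
  funext x
  exact (((hasDerivAt_combo c₀ A₀ x).add (hasDerivAt_combo c₁ A₁ x)).add
    (hasDerivAt_combo c₂ A₂ x)).deriv

theorem stmt2 (ω σ : ℂ) (hω : ω = Complex.exp (2 * π * Complex.I / 3))
    (hσ : σ ≠ 0)
    (hzero : Complex.exp (Complex.I * σ) + ω * Complex.exp (Complex.I * ω * σ)
      + ω ^ 2 * Complex.exp (Complex.I * ω ^ 2 * σ) = 0)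
    (ψ : ℝ → ℂ)
    (hψ : ∀ x : ℝ, ψ x = ∑ r ∈ Finset.range 3,
      Complex.exp (-Complex.I * ω ^ r * σ * x) *
        (Complex.exp (-Complex.I * ω ^ (r + 2) * σ) - Complex.exp (-Complex.I * ω ^ (r + 1) * σ))) :
    (∀ x ∈ Set.Icc (0:ℝ) 1, (-Complex.I) ^ 3 * iteratedDeriv 3 ψ x = -σ ^ 3 * ψ x) ∧
    ψ 0 = 0 ∧ ψ 1 = 0 ∧ deriv ψ 1 = 0 := by
  have hω3 : ω ^ 3 = 1 := by
    rw [hω, ← Complex.exp_nat_mul,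
      show (3 : ℕ) * (2 * ↑π * Complex.I / 3) = 2 * ↑π * Complex.I by push_cast; ring,
      Complex.exp_two_pi_mul_I]
  have hω1 : ω ≠ 1 := by
    intro h
    rw [hω, Complex.exp_eq_one_iff] at h
    obtain ⟨n, hn⟩ := h
    have h2 : (2 : ℂ) * ↑π * Complex.I ≠ 0 := by
      simp [Real.pi_ne_zero, Complex.I_ne_zero]
    have h3 : (3 : ℂ) * (↑n * (2 * ↑π * Complex.I)) = 1 * (2 * ↑π * Complex.I) := by
      rw [← hn]; ring
    have h4 : (3 : ℂ) * ↑n = 1 := by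
      have := mul_right_cancel₀ h2 (by linear_combination h3 : ((3:ℂ) * ↑n) * (2 * ↑π * Complex.I) = 1 * (2 * ↑π * Complex.I))
      exact this
    have : (3 * n : ℤ) = 1 := by exact_mod_cast h4
    omega
  have hω2 : 1 + ω + ω ^ 2 = 0 := by
    have h : (ω - 1) * (ω ^ 2 + ω + 1) = 0 := by linear_combination hω3
    rcases mul_eq_zero.mp h with h' | h'
    · exact absurd (sub_eq_zero.mp h') hω1
    · linear_combination h'
  have hψF : ψ = fun x : ℝ =>
      Complex.exp (-Complex.I * ω ^ 0 * σ * (x : ℂ)) *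
        (Complex.exp (-Complex.I * ω ^ 2 * σ) - Complex.exp (-Complex.I * ω ^ 1 * σ))
    + Complex.exp (-Complex.I * ω ^ 1 * σ * (x : ℂ)) *
        (Complex.exp (-Complex.I * ω ^ 3 * σ) - Complex.exp (-Complex.I * ω ^ 2 * σ))
    + Complex.exp (-Complex.I * ω ^ 2 * σ * (x : ℂ)) *
        (Complex.exp (-Complex.I * ω ^ 4 * σ) - Complex.exp (-Complex.I * ω ^ 3 * σ)) := by
    funext x
    rw [hψ, Finset.sum_range_succ, Finset.sum_range_succ, Finset.sum_range_one]
  have h30 : ω ^ 3 = ω ^ 0 := by linear_combination hω3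
  have h41 : ω ^ 4 = ω ^ 1 := by linear_combination ω * hω3
  have k1 : Complex.exp (-Complex.I * ω ^ 0 * σ) * Complex.exp (-Complex.I * ω ^ 2 * σ)
      = Complex.exp (Complex.I * ω * σ) := by
    rw [← Complex.exp_add]; congr 1; linear_combination (-Complex.I * σ) * hω2
  have k2 : Complex.exp (-Complex.I * ω ^ 0 * σ) * Complex.exp (-Complex.I * ω ^ 1 * σ)
      = Complex.exp (Complex.I * ω ^ 2 * σ) := by
    rw [← Complex.exp_add]; congr 1; linear_combination (-Complex.I * σ) * hω2
  have k3 : Complex.exp (-Complex.I * ω ^ 1 * σ) * Complex.exp (-Complex.I * ω ^ 2 * σ)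
      = Complex.exp (Complex.I * σ) := by
    rw [← Complex.exp_add]; congr 1; linear_combination (-Complex.I * σ) * hω2
  refine ⟨?_, ?_, ?_, ?_⟩
  · intro x hx
    rw [hψF]
    simp only [iteratedDeriv_succ, iteratedDeriv_zero]
    rw [deriv_three, deriv_three, deriv_three]
    have hI : Complex.I ^ 2 = -1 := Complex.I_sq
    linear_combination (-σ ^ 3 * Complex.exp (-Complex.I * ω ^ 1 * σ * (x : ℂ)) *
        (Complex.exp (-Complex.I * ω ^ 3 * σ) - Complex.exp (-Complex.I * ω ^ 2 * σ))
      - σ ^ 3 * (ω ^ 3 + 1) * Complex.exp (-Complex.I * ω ^ 2 * σ * (x : ℂ)) *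
        (Complex.exp (-Complex.I * ω ^ 4 * σ) - Complex.exp (-Complex.I * ω ^ 3 * σ))) * hω3
      + ((Complex.I ^ 4 - Complex.I ^ 2 + 1) * σ ^ 3 *
        (Complex.exp (-Complex.I * ω ^ 0 * σ * (x : ℂ)) *
          (Complex.exp (-Complex.I * ω ^ 2 * σ) - Complex.exp (-Complex.I * ω ^ 1 * σ))
        + ω ^ 3 * Complex.exp (-Complex.I * ω ^ 1 * σ * (x : ℂ)) *
          (Complex.exp (-Complex.I * ω ^ 3 * σ) - Complex.exp (-Complex.I * ω ^ 2 * σ))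
        + ω ^ 6 * Complex.exp (-Complex.I * ω ^ 2 * σ * (x : ℂ)) *
          (Complex.exp (-Complex.I * ω ^ 4 * σ) - Complex.exp (-Complex.I * ω ^ 3 * σ)))) * hI
  · rw [hψF]
    simp only [Complex.ofReal_zero, mul_zero, Complex.exp_zero, one_mul]
    rw [h30, h41]
    ring
  · rw [hψF]
    simp only [Complex.ofReal_one, mul_one]
    rw [h30, h41]
    ring
  · rw [hψF, deriv_three]
    simp only [Complex.ofReal_one, mul_one]
    rw [h30, h41]
    linear_combination (-Complex.I * σ * (1 - ω ^ 2)) * k1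
      + (-Complex.I * σ * (ω - 1)) * k2
      + (-Complex.I * σ * (ω ^ 2 - ω)) * k3
      + (-Complex.I * σ * (ω ^ 2 - ω)) * hzero
      + (Complex.I * σ * Complex.exp (Complex.I * ω * σ)
        + Complex.I * σ * (ω - 1) * Complex.exp (Complex.I * ω ^ 2 * σ)) * hω3
end

section
/- With notation as above, the L² norms of the eigenfunctions satisfy ‖ψ_k‖² = ‖φ_k‖² = (3√3 e^{(4π/√3)(k + 1/6)})/(4π(k + 1/6)) + O(e^{(2π/√3)k}/k) as k → ∞. -/
open Filter Asymptotics
open scoped Real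

set_option maxHeartbeats 4000000

noncomputable def Complex.abs : AbsoluteValue ℂ ℝ := NormedField.toAbsoluteValue ℂ

@[simp] lemma Complex.abs_apply' (z : ℂ) : Complex.abs z = ‖z‖ := rfl

@[simp] lemma Complex.abs_exp (z : ℂ) : Complex.abs (Complex.exp z) = Real.exp z.re := by
  simp [Complex.norm_exp]

@[simp] lemma Complex.abs_ofReal (r : ℝ) : Complex.abs (r : ℂ) = |r| := by simp

@[simp] lemma Complex.abs_two : Complex.abs 2 = 2 := by simp

lemma Complex.abs_re_le_abs (z : ℂ) : |z.re| ≤ Complex.abs z := by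
  simpa using Complex.abs_re_le_norm z

lemma expD {c : ℂ} (hc : c ≠ 0) (x : ℝ) :
    HasDerivAt (fun y : ℝ => Complex.exp (c * y) / c) (Complex.exp (c * x)) x := by
  rw [← mul_div_cancel_right₀ (Complex.exp (c * x)) hc]
  apply ((Complex.hasDerivAt_exp _).comp x _).div_const c
  simpa using ((hasDerivAt_id x).ofReal_comp).const_mul c

lemma sq_int (A0 A1 A2 B0 B1 B2 : ℂ) (h00 : B0+B0 ≠ 0) (h11 : B1+B1 ≠ 0) (h22 : B2+B2 ≠ 0)
    (h01 : B0+B1 ≠ 0) (h02 : B0+B2 ≠ 0) (h12 : B1+B2 ≠ 0) :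
    ∫ x in (0:ℝ)..1, (A0 * Complex.exp (B0*x) + A1 * Complex.exp (B1*x) + A2 * Complex.exp (B2*x))^2
    = A0^2 * ((Complex.exp (B0+B0) - 1)/(B0+B0)) + A1^2 * ((Complex.exp (B1+B1) - 1)/(B1+B1))
      + A2^2 * ((Complex.exp (B2+B2) - 1)/(B2+B2))
      + 2*A0*A1 * ((Complex.exp (B0+B1) - 1)/(B0+B1))
      + 2*A0*A2 * ((Complex.exp (B0+B2) - 1)/(B0+B2))
      + 2*A1*A2 * ((Complex.exp (B1+B2) - 1)/(B1+B2)) := by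
  set F : ℝ → ℂ := fun x =>
    A0^2 * (Complex.exp ((B0+B0)*x)/(B0+B0)) + A1^2 * (Complex.exp ((B1+B1)*x)/(B1+B1))
    + A2^2 * (Complex.exp ((B2+B2)*x)/(B2+B2)) + 2*A0*A1 * (Complex.exp ((B0+B1)*x)/(B0+B1))
    + 2*A0*A2 * (Complex.exp ((B0+B2)*x)/(B0+B2)) + 2*A1*A2 * (Complex.exp ((B1+B2)*x)/(B1+B2))
    with hF
  have hD : ∀ x ∈ Set.uIcc (0:ℝ) 1, HasDerivAt F
      ((A0 * Complex.exp (B0*x) + A1 * Complex.exp (B1*x) + A2 * Complex.exp (B2*x))^2) x := by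
    intro x _
    have : HasDerivAt F
        (A0^2 * Complex.exp ((B0+B0)*x) + A1^2 * Complex.exp ((B1+B1)*x)
        + A2^2 * Complex.exp ((B2+B2)*x) + 2*A0*A1 * Complex.exp ((B0+B1)*x)
        + 2*A0*A2 * Complex.exp ((B0+B2)*x) + 2*A1*A2 * Complex.exp ((B1+B2)*x)) x := by
      exact (((((((expD h00 x).const_mul (A0^2)).add
        ((expD h11 x).const_mul (A1^2))).add
        ((expD h22 x).const_mul (A2^2))).add
        ((expD h01 x).const_mul (2*A0*A1))).add
        ((expD h02 x).const_mul (2*A0*A2))).add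
        ((expD h12 x).const_mul (2*A1*A2)))
    convert this using 1
    simp only [add_mul, Complex.exp_add]
    ring
  have hcont : IntervalIntegrable (fun x : ℝ =>
      (A0 * Complex.exp (B0*x) + A1 * Complex.exp (B1*x) + A2 * Complex.exp (B2*x))^2)
      MeasureTheory.volume 0 1 := by
    apply Continuous.intervalIntegrable; fun_prop
  rw [intervalIntegral.integral_eq_sub_of_hasDerivAt hD hcont]
  simp only [hF, Complex.ofReal_one, Complex.ofReal_zero, mul_one, mul_zero, Complex.exp_zero]
  ring


lemma int_re0 (f : ℝ → ℂ) (hf : Continuous f) :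
    ∫ x in (0:ℝ)..1, (f x).re = (∫ x in (0:ℝ)..1, f x).re := by
  rw [intervalIntegral.integral_of_le zero_le_one, intervalIntegral.integral_of_le zero_le_one,
    ← RCLike.re_eq_complex_re, ← _root_.integral_re (hf.integrableOn_Ioc),
    RCLike.re_eq_complex_re]

noncomputable def Sval (ω : ℂ) (t : ℝ) : ℂ :=
  (Complex.exp (-(ω^2*t)) - Complex.exp (-(ω*t)))^2 *
      ((Complex.exp (-(t:ℂ) + -(t:ℂ)) - 1)/(-(t:ℂ) + -(t:ℂ)))
  + (Complex.exp (-(t:ℂ)) - Complex.exp (-(ω^2*t)))^2 *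
      ((Complex.exp (-(ω*t) + -(ω*t)) - 1)/(-(ω*t) + -(ω*t)))
  + (Complex.exp (-(ω*t)) - Complex.exp (-(t:ℂ)))^2 *
      ((Complex.exp (-(ω^2*t) + -(ω^2*t)) - 1)/(-(ω^2*t) + -(ω^2*t)))
  + 2*(Complex.exp (-(ω^2*t)) - Complex.exp (-(ω*t)))*(Complex.exp (-(t:ℂ)) - Complex.exp (-(ω^2*t))) *
      ((Complex.exp (-(t:ℂ) + -(ω*t)) - 1)/(-(t:ℂ) + -(ω*t)))
  + 2*(Complex.exp (-(ω^2*t)) - Complex.exp (-(ω*t)))*(Complex.exp (-(ω*t)) - Complex.exp (-(t:ℂ))) *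
      ((Complex.exp (-(t:ℂ) + -(ω^2*t)) - 1)/(-(t:ℂ) + -(ω^2*t)))
  + 2*(Complex.exp (-(t:ℂ)) - Complex.exp (-(ω^2*t)))*(Complex.exp (-(ω*t)) - Complex.exp (-(t:ℂ))) *
      ((Complex.exp (-(ω*t) + -(ω^2*t)) - 1)/(-(ω*t) + -(ω^2*t)))

lemma exp_sub_one_abs {z : ℂ} (h : z.re ≤ 0) : Complex.abs (Complex.exp z - 1) ≤ 2 := by
  calc Complex.abs (Complex.exp z - 1) ≤ Complex.abs (Complex.exp z) + Complex.abs 1 := by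
        simpa [sub_eq_add_neg] using Complex.abs.add_le (Complex.exp z) (-1)
    _ ≤ 1 + 1 := by
        rw [Complex.abs_exp, map_one]; gcongr; exact Real.exp_le_one_iff.mpr h
    _ = 2 := by norm_num

lemma main_est (ω : ℂ) (hω3 : ω^3 = 1) (hωs : 1 + ω + ω^2 = 0)
    (hre : ω.re = -1/2) (hre2 : (ω^2).re = -1/2) (habs : Complex.abs ω = 1)
    (t : ℝ) (ht : 1 ≤ t) :
    Complex.abs (Sval ω t + 3/2 * ((Real.exp (2*t) : ℝ) : ℂ) / (t : ℝ)) ≤ 60 * Real.exp t / t := by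
  have ht0 : (0:ℝ) < t := lt_of_lt_of_le one_pos ht
  have htC : (t:ℂ) ≠ 0 := by exact_mod_cast ne_of_gt ht0
  have hω0 : ω ≠ 0 := by
    intro h; rw [h] at hω3; simp at hω3
  set u := Complex.exp (-(ω*t)) with hu
  set v := Complex.exp (-(ω^2*t)) with hv
  set w := Complex.exp (-(t:ℂ)) with hw
  set X := Complex.exp ((t:ℂ)) with hXdef
  have hX : u * v = X := by
    rw [hu, hv, hXdef, ← Complex.exp_add]
    congr 1
    linear_combination (-(t:ℂ)) * hωs
  have hXr : X = ((Real.exp t : ℝ) : ℂ) := (Complex.ofReal_exp t).symm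
  -- rewrite Sval
  have e00 : Complex.exp (-(t:ℂ) + -(t:ℂ)) = w^2 := by rw [hw]; conv_rhs => rw [sq, ← Complex.exp_add]
  have e11 : Complex.exp (-(ω*(t:ℂ)) + -(ω*(t:ℂ))) = u^2 := by rw [hu]; conv_rhs => rw [sq, ← Complex.exp_add]
  have e22 : Complex.exp (-(ω^2*(t:ℂ)) + -(ω^2*(t:ℂ))) = v^2 := by rw [hv]; conv_rhs => rw [sq, ← Complex.exp_add]
  have b01 : -(t:ℂ) + -(ω*(t:ℂ)) = ω^2*t := by linear_combination (-(t:ℂ)) * hωs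
  have b02 : -(t:ℂ) + -(ω^2*(t:ℂ)) = ω*t := by linear_combination (-(t:ℂ)) * hωs
  have b12 : -(ω*(t:ℂ)) + -(ω^2*(t:ℂ)) = (t:ℂ) := by linear_combination (-(t:ℂ)) * hωs
  have hSval : Sval ω t =
      (v-u)^2 * ((w^2 - 1)/(-(2*(t:ℂ))))
      + (w-v)^2 * ((u^2 - 1)/(-(2*(ω*(t:ℂ)))))
      + (u-w)^2 * ((v^2 - 1)/(-(2*(ω^2*(t:ℂ)))))
      + 2*(v-u)*(w-v) * ((Complex.exp (ω^2*t) - 1)/(ω^2*t))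
      + 2*(v-u)*(u-w) * ((Complex.exp (ω*t) - 1)/(ω*t))
      + 2*(w-v)*(u-w) * ((X - 1)/(t:ℂ)) := by
    rw [Sval, b01, b02, b12, e00, e11, e22, ← hu, ← hv, ← hw, ← hXdef]
    norm_num
    ring_nf

  -- key scalar identity
  have hne1 : (2*(ω*(t:ℂ))) ≠ 0 := by
    apply mul_ne_zero (two_ne_zero) (mul_ne_zero hω0 htC)
  have hne2 : (2*(ω^2*(t:ℂ))) ≠ 0 := by
    apply mul_ne_zero (two_ne_zero) (mul_ne_zero (pow_ne_zero 2 hω0) htC)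
  have hne3 : (2*(t:ℂ)) ≠ 0 := mul_ne_zero two_ne_zero htC
  have hmain0 : (u*v)^2/(2*(ω*(t:ℂ))) + (u*v)^2/(2*(ω^2*(t:ℂ))) + (u*v)^2/(2*(t:ℂ)) = 0 := by
    have d1 : (u*v)^2/(2*(ω*(t:ℂ))) = (u*v)^2 * ω^2 / (2*(t:ℂ)) := by
      rw [div_eq_div_iff hne1 hne3]
      linear_combination (-((u*v)^2 * 2*(t:ℂ))) * hω3
    have d2 : (u*v)^2/(2*(ω^2*(t:ℂ))) = (u*v)^2 * ω / (2*(t:ℂ)) := by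
      rw [div_eq_div_iff hne2 hne3]
      linear_combination (-((u*v)^2 * 2*(t:ℂ))) * hω3
    rw [d1, d2, ← add_div, ← add_div,
      show (u*v)^2*ω^2 + (u*v)^2*ω + (u*v)^2 = (u*v)^2 * (1+ω+ω^2) by ring, hωs, mul_zero,
      zero_div]
  have hX2' : ((Real.exp (2*t) : ℝ) : ℂ) = (u*v)^2 := by
    rw [hX, hXr]
    norm_cast
    rw [show (2:ℝ)*t = t + t by ring, Real.exp_add]
    ring
  have hdecomp : Sval ω t + 3/2 * ((Real.exp (2*t) : ℝ) : ℂ) / (t : ℝ) =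
      (v-u)^2 * ((w^2 - 1)/(-(2*(t:ℂ))))
      + ((w^2 - 2*w*v)*u^2 - (w-v)^2)/(-(2*(ω*(t:ℂ))))
      + ((w^2 - 2*w*u)*v^2 - (u-w)^2)/(-(2*(ω^2*(t:ℂ))))
      + 2*(v-u)*(w-v) * ((Complex.exp (ω^2*t) - 1)/(ω^2*t))
      + 2*(v-u)*(u-w) * ((Complex.exp (ω*t) - 1)/(ω*t))
      + 2*((w*u + v*w - w^2)*(u*v) - (w-v)*(u-w))/(t:ℂ) := by
    rw [hSval, hX2', ← hX]
    linear_combination -hmain0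
  -- abs values
  have hu_abs : Complex.abs u = Real.exp (t/2) := by
    rw [hu, Complex.abs_exp]
    congr 1
    simp [Complex.mul_re, hre]
    ring
  have hv_abs : Complex.abs v = Real.exp (t/2) := by
    rw [hv, Complex.abs_exp]
    congr 1
    simp [Complex.mul_re, hre2]
    ring
  have hw_abs : Complex.abs w = Real.exp (-t) := by
    rw [hw, Complex.abs_exp]
    simp
  set E := Real.exp t with hE
  set Eh := Real.exp (t/2) with hEh
  have hE0 : 0 < E := Real.exp_pos t
  have hEh0 : 0 < Eh := Real.exp_pos _
  have hw0 : 0 < Real.exp (-t) := Real.exp_pos _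
  have hEh2 : Eh * Eh = E := by rw [hEh, hE, ← Real.exp_add]; norm_num
  have hE1 : 1 ≤ E := by rw [hE]; exact Real.one_le_exp (by linarith)
  have hEh1 : 1 ≤ Eh := by rw [hEh]; exact Real.one_le_exp (by linarith)
  have hw1 : Real.exp (-t) ≤ 1 := Real.exp_le_one_iff.mpr (by linarith)
  have hwEh : Real.exp (-t) * Eh ≤ 1 := by
    rw [hEh, ← Real.exp_add]
    exact Real.exp_le_one_iff.mpr (by linarith)
  have hww : Real.exp (-t) * Real.exp (-t) ≤ 1 := by nlinarith
  have tri : ∀ a b : ℂ, Complex.abs (a+b) ≤ Complex.abs a + Complex.abs b := Complex.abs.add_le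
  have trisub : ∀ a b : ℂ, Complex.abs (a-b) ≤ Complex.abs a + Complex.abs b := by
    intro a b
    simpa [sub_eq_add_neg] using Complex.abs.add_le a (-b)
  have hA0 : Complex.abs (v-u) ≤ 2*Eh := by
    calc Complex.abs (v-u) ≤ Complex.abs v + Complex.abs u := trisub v u
      _ = 2*Eh := by rw [hu_abs, hv_abs]; ring
  have hA1 : Complex.abs (w-v) ≤ 2*Eh := by
    calc Complex.abs (w-v) ≤ Complex.abs w + Complex.abs v := trisub w v
      _ ≤ Eh + Eh := by rw [hw_abs, hv_abs]; gcongr; linarith [hwEh, hEh1]; 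
      _ = 2*Eh := by ring
  have hA2 : Complex.abs (u-w) ≤ 2*Eh := by
    calc Complex.abs (u-w) ≤ Complex.abs u + Complex.abs w := trisub u w
      _ ≤ Eh + Eh := by rw [hu_abs, hw_abs]; gcongr; linarith [hwEh, hEh1]
      _ = 2*Eh := by ring
  -- denominators
  have habs2t : Complex.abs (-(2*(t:ℂ))) = 2*t := by
    rw [show (-(2*(t:ℂ))) = ((-(2*t):ℝ):ℂ) by push_cast; ring, Complex.abs_ofReal,
      abs_of_nonpos (by linarith)]
    ring
  have habsωt : Complex.abs (ω*(t:ℂ)) = t := by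
    rw [map_mul, habs, Complex.abs_ofReal, abs_of_pos ht0, one_mul]
  have habsω2t : Complex.abs (ω^2*(t:ℂ)) = t := by
    rw [map_mul, map_pow, habs, Complex.abs_ofReal, abs_of_pos ht0, one_pow, one_mul]
  have habs2ωt : Complex.abs (-(2*(ω*(t:ℂ)))) = 2*t := by
    rw [map_neg_eq_map, map_mul, habsωt, Complex.abs_two]
  have habs2ω2t : Complex.abs (-(2*(ω^2*(t:ℂ)))) = 2*t := by
    rw [map_neg_eq_map, map_mul, habsω2t, Complex.abs_two]
  -- re's nonpos
  have hreωt : (ω*(t:ℂ)).re ≤ 0 := by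
    simp [Complex.mul_re, hre]
    linarith
  have hreω2t : (ω^2*(t:ℂ)).re ≤ 0 := by
    simp [Complex.mul_re, hre2]
    linarith
  have hre2t : (-(2*(t:ℂ))).re ≤ 0 := by
    simp
    linarith
  -- numerator smalls
  have hsmall1 : Complex.abs (w^2 - 2*w*v) ≤ 3 := by
    calc Complex.abs (w^2 - 2*w*v) ≤ Complex.abs (w^2) + Complex.abs (2*w*v) := trisub _ _
      _ = Real.exp (-t) * Real.exp (-t) + 2 * (Real.exp (-t) * Eh) := by
          rw [map_mul, map_mul, sq, map_mul, hw_abs, hv_abs, Complex.abs_two]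
          ring
      _ ≤ 3 := by linarith
  have hsmall2 : Complex.abs (w^2 - 2*w*u) ≤ 3 := by
    calc Complex.abs (w^2 - 2*w*u) ≤ Complex.abs (w^2) + Complex.abs (2*w*u) := trisub _ _
      _ = Real.exp (-t) * Real.exp (-t) + 2 * (Real.exp (-t) * Eh) := by
          rw [map_mul, map_mul, sq, map_mul, hw_abs, hu_abs, Complex.abs_two]
          ring
      _ ≤ 3 := by linarith
  have hsmall3 : Complex.abs (w*u + v*w - w^2) ≤ 3 := by
    calc Complex.abs (w*u + v*w - w^2)
        ≤ Complex.abs (w*u + v*w) + Complex.abs (w^2) := trisub _ _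
      _ ≤ (Complex.abs (w*u) + Complex.abs (v*w)) + Complex.abs (w^2) := by
          gcongr
          exact tri _ _
      _ = Real.exp (-t)*Eh + Eh*Real.exp (-t) + Real.exp (-t)*Real.exp (-t) := by
          rw [map_mul, map_mul, sq, map_mul, hw_abs, hu_abs, hv_abs]
      _ ≤ 3 := by nlinarith
  -- term bounds
  have hP1 : Complex.abs ((v-u)^2 * ((w^2 - 1)/(-(2*(t:ℂ))))) ≤ 4*E/t := by
    rw [map_mul, map_div₀, map_pow, habs2t]
    have h1 : Complex.abs (w^2 - 1) ≤ 2 := by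
      rw [show w^2 = Complex.exp (-(2*(t:ℂ))) from by rw [← e00]; congr 1; ring]
      exact exp_sub_one_abs hre2t
    calc (Complex.abs (v-u))^2 * (Complex.abs (w^2-1)/(2*t))
        ≤ (2*Eh)^2 * (2/(2*t)) := by
          gcongr
      _ = 4*E/t := by
          rw [show ((2*Eh)^2 * (2/(2*t)) : ℝ) = 4*(Eh*Eh)/t by field_simp; ring, hEh2]
  have hP2 : Complex.abs (((w^2 - 2*w*v)*u^2 - (w-v)^2)/(-(2*(ω*(t:ℂ))))) ≤ 4*E/t := by
    rw [map_div₀, habs2ωt]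
    have hnum : Complex.abs ((w^2 - 2*w*v)*u^2 - (w-v)^2) ≤ 7*E := by
      calc Complex.abs ((w^2 - 2*w*v)*u^2 - (w-v)^2)
          ≤ Complex.abs ((w^2 - 2*w*v)*u^2) + Complex.abs ((w-v)^2) := trisub _ _
        _ = Complex.abs (w^2 - 2*w*v) * (Eh*Eh) + (Complex.abs (w-v))^2 := by
            rw [map_mul, map_pow, map_pow, hu_abs]
            ring
        _ ≤ 3 * (Eh*Eh) + (2*Eh)^2 := by
            gcongr
        _ = 7*E := by rw [show ((2*Eh)^2 : ℝ) = 4*(Eh*Eh) by ring, hEh2]; ring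
    calc Complex.abs ((w^2 - 2*w*v)*u^2 - (w-v)^2) / (2*t) ≤ 7*E/(2*t) := by gcongr
      _ ≤ 4*E/t := by rw [div_le_div_iff₀ (by linarith) (by linarith)]; nlinarith
  have hP3 : Complex.abs (((w^2 - 2*w*u)*v^2 - (u-w)^2)/(-(2*(ω^2*(t:ℂ))))) ≤ 4*E/t := by
    rw [map_div₀, habs2ω2t]
    have hnum : Complex.abs ((w^2 - 2*w*u)*v^2 - (u-w)^2) ≤ 7*E := by
      calc Complex.abs ((w^2 - 2*w*u)*v^2 - (u-w)^2)
          ≤ Complex.abs ((w^2 - 2*w*u)*v^2) + Complex.abs ((u-w)^2) := trisub _ _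
        _ = Complex.abs (w^2 - 2*w*u) * (Eh*Eh) + (Complex.abs (u-w))^2 := by
            rw [map_mul, map_pow, map_pow, hv_abs]
            ring
        _ ≤ 3 * (Eh*Eh) + (2*Eh)^2 := by
            gcongr
        _ = 7*E := by rw [show ((2*Eh)^2 : ℝ) = 4*(Eh*Eh) by ring, hEh2]; ring
    calc Complex.abs ((w^2 - 2*w*u)*v^2 - (u-w)^2) / (2*t) ≤ 7*E/(2*t) := by gcongr
      _ ≤ 4*E/t := by rw [div_le_div_iff₀ (by linarith) (by linarith)]; nlinarith
  have hP4 : Complex.abs (2*(v-u)*(w-v) * ((Complex.exp (ω^2*t) - 1)/(ω^2*t))) ≤ 16*E/t := by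
    rw [map_mul, map_mul, map_mul, map_div₀, habsω2t, Complex.abs_two]
    calc 2 * Complex.abs (v-u) * Complex.abs (w-v) * (Complex.abs (Complex.exp (ω^2*t) - 1)/t)
        ≤ 2 * (2*Eh) * (2*Eh) * (2/t) := by
          gcongr <;> first
            | exact exp_sub_one_abs hreω2t
            | exact Complex.abs.nonneg _
            | positivity
      _ = 16*E/t := by
          rw [show (2*(2*Eh)*(2*Eh)*(2/t) : ℝ) = 16*(Eh*Eh)/t by field_simp; ring, hEh2]
  have hP5 : Complex.abs (2*(v-u)*(u-w) * ((Complex.exp (ω*t) - 1)/(ω*t))) ≤ 16*E/t := by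
    rw [map_mul, map_mul, map_mul, map_div₀, habsωt, Complex.abs_two]
    calc 2 * Complex.abs (v-u) * Complex.abs (u-w) * (Complex.abs (Complex.exp (ω*t) - 1)/t)
        ≤ 2 * (2*Eh) * (2*Eh) * (2/t) := by
          gcongr <;> first
            | exact exp_sub_one_abs hreωt
            | exact Complex.abs.nonneg _
            | positivity
      _ = 16*E/t := by
          rw [show (2*(2*Eh)*(2*Eh)*(2/t) : ℝ) = 16*(Eh*Eh)/t by field_simp; ring, hEh2]
  have hP6 : Complex.abs (2*((w*u + v*w - w^2)*(u*v) - (w-v)*(u-w))/(t:ℂ)) ≤ 14*E/t := by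
    rw [map_div₀, map_mul, Complex.abs_two, Complex.abs_ofReal, abs_of_pos ht0]
    have hnum : Complex.abs ((w*u + v*w - w^2)*(u*v) - (w-v)*(u-w)) ≤ 7*E := by
      calc Complex.abs ((w*u + v*w - w^2)*(u*v) - (w-v)*(u-w))
          ≤ Complex.abs ((w*u + v*w - w^2)*(u*v)) + Complex.abs ((w-v)*(u-w)) := trisub _ _
        _ = Complex.abs (w*u + v*w - w^2) * (Eh*Eh)
            + Complex.abs (w-v) * Complex.abs (u-w) := by
            rw [map_mul, map_mul, map_mul, hu_abs, hv_abs]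
        _ ≤ 3 * (Eh*Eh) + (2*Eh) * (2*Eh) := by
            gcongr <;> first
              | exact Complex.abs.nonneg _
              | positivity
        _ = 7*E := by rw [show ((2*Eh)*(2*Eh) : ℝ) = 4*(Eh*Eh) by ring, hEh2]; ring
    calc 2 * Complex.abs ((w*u + v*w - w^2)*(u*v) - (w-v)*(u-w)) / t ≤ 2*(7*E)/t := by gcongr
      _ = 14*E/t := by ring
  rw [hdecomp]
  calc Complex.abs ((v-u)^2 * ((w^2 - 1)/(-(2*(t:ℂ))))
      + ((w^2 - 2*w*v)*u^2 - (w-v)^2)/(-(2*(ω*(t:ℂ))))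
      + ((w^2 - 2*w*u)*v^2 - (u-w)^2)/(-(2*(ω^2*(t:ℂ))))
      + 2*(v-u)*(w-v) * ((Complex.exp (ω^2*t) - 1)/(ω^2*t))
      + 2*(v-u)*(u-w) * ((Complex.exp (ω*t) - 1)/(ω*t))
      + 2*((w*u + v*w - w^2)*(u*v) - (w-v)*(u-w))/(t:ℂ))
      ≤ 4*E/t + 4*E/t + 4*E/t + 16*E/t + 16*E/t + 14*E/t := by
        refine le_trans (tri _ _) (add_le_add (le_trans (tri _ _) (add_le_add (le_trans (tri _ _)
          (add_le_add (le_trans (tri _ _) (add_le_add (le_trans (tri _ _)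
          (add_le_add hP1 hP2)) hP3)) hP4)) hP5)) hP6)
    _ ≤ 60 * E / t := by
        rw [← add_div, ← add_div, ← add_div, ← add_div,
          ← add_div, div_le_div_iff₀ (by linarith) (by linarith)]
        nlinarith
theorem stmt4 (ω : ℂ) (hω : ω = Complex.exp (2 * π * Complex.I / 3))
    (σ : ℕ → ℂ) (hσ : ∀ k, (σ k).re = 0 ∧ 0 < (σ k).im)
    (hasymp : (fun k : ℕ => (-Complex.I * σ k)
        - (((2 * π / Real.sqrt 3) * ((k : ℝ) + 1 / 6) : ℝ) : ℂ))
      =O[atTop] fun k : ℕ => Real.exp (-(Real.sqrt 3) * π * (k : ℝ)))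
    (φ ψ : ℕ → ℝ → ℂ)
    (hφ : ∀ k (x : ℝ), φ k x = ∑ r ∈ Finset.range 3,
      Complex.exp (Complex.I * ω ^ r * σ k * x) *
        (Complex.exp (Complex.I * ω ^ (r + 2) * σ k) - Complex.exp (Complex.I * ω ^ (r + 1) * σ k)))
    (hψ : ∀ k (x : ℝ), ψ k x = ∑ r ∈ Finset.range 3,
      Complex.exp (-Complex.I * ω ^ r * σ k * x) *
        (Complex.exp (-Complex.I * ω ^ (r + 2) * σ k) - Complex.exp (-Complex.I * ω ^ (r + 1) * σ k))) :
    (∀ k, (∫ x in (0:ℝ)..1, ‖ψ k x‖ ^ 2) = ∫ x in (0:ℝ)..1, ‖φ k x‖ ^ 2) ∧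
    (fun k : ℕ => (∫ x in (0:ℝ)..1, ‖φ k x‖ ^ 2)
        - 3 * Real.sqrt 3 * Real.exp ((4 * π / Real.sqrt 3) * ((k : ℝ) + 1 / 6))
          / (4 * π * ((k : ℝ) + 1 / 6)))
      =O[atTop] fun k : ℕ => Real.exp ((2 * π / Real.sqrt 3) * (k : ℝ)) / (k : ℝ) := by
  -- ω facts
  have hω3 : ω^3 = 1 := by
    rw [hω, ← Complex.exp_nat_mul]
    rw [show (3:ℕ) * (2 * (π:ℂ) * Complex.I / 3) = 2 * π * Complex.I by push_cast; ring]
    exact Complex.exp_two_pi_mul_I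
  have hωform : ω = Complex.exp (((2*π/3 : ℝ) : ℂ) * Complex.I) := by
    rw [hω]; congr 1; push_cast; ring
  have hre : ω.re = -1/2 := by
    rw [hωform, Complex.exp_ofReal_mul_I_re, show 2*π/3 = π - π/3 by ring,
      Real.cos_pi_sub, Real.cos_pi_div_three]
    norm_num
  have hω1 : ω ≠ 1 := by
    intro h; rw [h] at hre; norm_num at hre
  have hωs : 1 + ω + ω^2 = 0 := by
    have h : (ω - 1) * (1 + ω + ω^2) = 0 := by linear_combination hω3
    rcases mul_eq_zero.mp h with h' | h'
    · exact absurd (sub_eq_zero.mp h') hω1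
    · exact h'
  have hre2 : (ω^2).re = -1/2 := by
    rw [show ω^2 = -1 - ω by linear_combination hωs]
    simp [hre]
    norm_num
  have habs : Complex.abs ω = 1 := by
    rw [hωform, Complex.abs_exp]
    simp
  have hω0 : ω ≠ 0 := by
    intro h; rw [h] at habs; simp at habs
  have hconjω : (starRingEnd ℂ) ω = ω^2 := by
    have h1 : ω⁻¹ = ω^2 := by
      apply inv_eq_of_mul_eq_one_right
      linear_combination hω3
    have h2 : ω⁻¹ = (starRingEnd ℂ) ω := by
      rw [Complex.inv_def, Complex.normSq_eq_norm_sq, ← Complex.abs_apply', habs]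
      simp
    rw [← h2, h1]
  -- normal form
  set t : ℕ → ℝ := fun k => (σ k).im with htdef
  have htk0 : ∀ k, 0 < t k := fun k => (hσ k).2
  have hσk : ∀ k, σ k = ((t k : ℝ) : ℂ) * Complex.I := by
    intro k
    apply Complex.ext
    · simp [(hσ k).1]
    · simp [htdef]
  have hIsq : (Complex.I)^2 = -1 := Complex.I_sq
  have hform : ∀ k (x : ℝ), φ k x =
      (Complex.exp (-(ω^2*(t k : ℝ))) - Complex.exp (-(ω*(t k : ℝ)))) * Complex.exp (-((t k : ℝ):ℂ) * x)
      + (Complex.exp (-((t k : ℝ):ℂ)) - Complex.exp (-(ω^2*(t k : ℝ)))) * Complex.exp (-(ω*(t k : ℝ)) * x)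
      + (Complex.exp (-(ω*(t k : ℝ))) - Complex.exp (-((t k : ℝ):ℂ))) * Complex.exp (-(ω^2*(t k : ℝ)) * x) := by
    intro k x
    rw [hφ k x, hσk k]
    rw [Finset.sum_range_succ, Finset.sum_range_succ, Finset.sum_range_one]
    rw [show Complex.I * ω^0 * (((t k : ℝ):ℂ) * Complex.I) * (x:ℂ) = -((t k : ℝ):ℂ) * x from by
      linear_combination (((t k : ℝ):ℂ) * (x:ℂ)) * hIsq]
    rw [show Complex.I * ω^1 * (((t k : ℝ):ℂ) * Complex.I) * (x:ℂ) = -(ω*(t k : ℝ)) * x from by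
      linear_combination (ω * ((t k : ℝ):ℂ) * (x:ℂ)) * hIsq]
    rw [show Complex.I * ω^2 * (((t k : ℝ):ℂ) * Complex.I) * (x:ℂ) = -(ω^2*(t k : ℝ)) * x from by
      linear_combination (ω^2 * ((t k : ℝ):ℂ) * (x:ℂ)) * hIsq]
    rw [show Complex.I * ω^(0+2) * (((t k : ℝ):ℂ) * Complex.I) = -(ω^2*(t k : ℝ)) from by
      linear_combination (ω^2 * ((t k : ℝ):ℂ)) * hIsq]
    rw [show Complex.I * ω^(0+1) * (((t k : ℝ):ℂ) * Complex.I) = -(ω*(t k : ℝ)) from by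
      linear_combination (ω * ((t k : ℝ):ℂ)) * hIsq]
    rw [show Complex.I * ω^(1+2) * (((t k : ℝ):ℂ) * Complex.I) = -((t k : ℝ):ℂ) from by
      linear_combination (ω^3 * ((t k : ℝ):ℂ)) * hIsq - ((t k : ℝ):ℂ) * hω3]
    rw [show Complex.I * ω^(2+2) * (((t k : ℝ):ℂ) * Complex.I) = -(ω*(t k : ℝ)) from by
      linear_combination (ω^4 * ((t k : ℝ):ℂ)) * hIsq - (ω*((t k : ℝ):ℂ)) * hω3]
    ring
  have hconj : ∀ k (x:ℝ), (starRingEnd ℂ) (φ k x) = -(φ k x) := by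
    intro k x
    rw [hform k x]
    simp only [map_add, map_mul, map_sub, ← Complex.exp_conj, map_neg, map_pow, hconjω,
      Complex.conj_ofReal]
    rw [show ((ω^2)^2 : ℂ) = ω from by linear_combination ω * hω3]
    ring
  -- ψ in terms of φ
  have hψform : ∀ k (x : ℝ), ψ k x = -(φ k (1-x)) := by
    intro k x
    have hx : ((1-x:ℝ):ℂ) = 1 - (x:ℂ) := by push_cast; ring
    rw [hψ k x, hσk k, hform k (1-x), hx]
    rw [Finset.sum_range_succ, Finset.sum_range_succ, Finset.sum_range_one]
    rw [show -Complex.I * ω^0 * (((t k : ℝ):ℂ) * Complex.I) * (x:ℂ) = ((t k : ℝ):ℂ) * x from by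
      linear_combination (-(((t k : ℝ):ℂ) * (x:ℂ))) * hIsq]
    rw [show -Complex.I * ω^1 * (((t k : ℝ):ℂ) * Complex.I) * (x:ℂ) = (ω*(t k : ℝ)) * x from by
      linear_combination (-(ω * ((t k : ℝ):ℂ) * (x:ℂ))) * hIsq]
    rw [show -Complex.I * ω^2 * (((t k : ℝ):ℂ) * Complex.I) * (x:ℂ) = (ω^2*(t k : ℝ)) * x from by
      linear_combination (-(ω^2 * ((t k : ℝ):ℂ) * (x:ℂ))) * hIsq]
    rw [show -Complex.I * ω^(0+2) * (((t k : ℝ):ℂ) * Complex.I) = ω^2*((t k : ℝ):ℂ) from by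
      linear_combination (-(ω^2 * ((t k : ℝ):ℂ))) * hIsq]
    rw [show -Complex.I * ω^(0+1) * (((t k : ℝ):ℂ) * Complex.I) = ω*((t k : ℝ):ℂ) from by
      linear_combination (-(ω * ((t k : ℝ):ℂ))) * hIsq]
    rw [show -Complex.I * ω^(1+2) * (((t k : ℝ):ℂ) * Complex.I) = ((t k : ℝ):ℂ) from by
      linear_combination (-(ω^3 * ((t k : ℝ):ℂ))) * hIsq + ((t k : ℝ):ℂ) * hω3]
    rw [show -Complex.I * ω^(2+2) * (((t k : ℝ):ℂ) * Complex.I) = ω*((t k : ℝ):ℂ) from by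
      linear_combination (-(ω^4 * ((t k : ℝ):ℂ))) * hIsq + (ω*((t k : ℝ):ℂ)) * hω3]
    rw [show -((t k : ℝ):ℂ) * (1 - (x:ℂ)) = -((t k : ℝ):ℂ) + ((t k : ℝ):ℂ)*x by ring,
      Complex.exp_add]
    rw [show -(ω*((t k : ℝ):ℂ)) * (1 - (x:ℂ)) = -(ω*((t k : ℝ):ℂ)) + (ω*((t k : ℝ):ℂ))*x by ring,
      Complex.exp_add]
    rw [show -(ω^2*((t k : ℝ):ℂ)) * (1 - (x:ℂ)) = -(ω^2*((t k : ℝ):ℂ)) + (ω^2*((t k : ℝ):ℂ))*x by ring,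
      Complex.exp_add]
    have huw : Complex.exp (-(ω*((t k : ℝ):ℂ))) * Complex.exp (-((t k : ℝ):ℂ))
        = Complex.exp (ω^2*((t k : ℝ):ℂ)) := by
      rw [← Complex.exp_add]; congr 1; linear_combination (-((t k : ℝ):ℂ)) * hωs
    have hvw : Complex.exp (-(ω^2*((t k : ℝ):ℂ))) * Complex.exp (-((t k : ℝ):ℂ))
        = Complex.exp (ω*((t k : ℝ):ℂ)) := by
      rw [← Complex.exp_add]; congr 1; linear_combination (-((t k : ℝ):ℂ)) * hωs
    have huv : Complex.exp (-(ω*((t k : ℝ):ℂ))) * Complex.exp (-(ω^2*((t k : ℝ):ℂ)))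
        = Complex.exp (((t k : ℝ):ℂ)) := by
      rw [← Complex.exp_add]; congr 1; linear_combination (-((t k : ℝ):ℂ)) * hωs
    linear_combination Complex.exp (((t k : ℝ):ℂ)*(x:ℂ)) * (hvw - huw)
      + Complex.exp ((ω*((t k : ℝ):ℂ))*(x:ℂ)) * (huw - huv)
      + Complex.exp ((ω^2*((t k : ℝ):ℂ))*(x:ℂ)) * (huv - hvw)
  -- the integral identity
  have hInt : ∀ k, (∫ x in (0:ℝ)..1, ‖φ k x‖^2) = (-(Sval ω (t k))).re := by
    intro k
    have htkC : ((t k : ℝ):ℂ) ≠ 0 := by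
      exact_mod_cast ne_of_gt (htk0 k)
    have hpt : ∀ x : ℝ, ‖φ k x‖^2 =
        (-(((Complex.exp (-(ω^2*(t k : ℝ))) - Complex.exp (-(ω*(t k : ℝ)))) * Complex.exp (-((t k : ℝ):ℂ) * x)
        + (Complex.exp (-((t k : ℝ):ℂ)) - Complex.exp (-(ω^2*(t k : ℝ)))) * Complex.exp (-(ω*(t k : ℝ)) * x)
        + (Complex.exp (-(ω*(t k : ℝ))) - Complex.exp (-((t k : ℝ):ℂ))) * Complex.exp (-(ω^2*(t k : ℝ)) * x))^2)).re := by
      intro x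
      have h2 : -((φ k x)^2) = φ k x * (starRingEnd ℂ) (φ k x) := by
        rw [hconj k x]; ring
      have h3 : ‖φ k x‖^2 = (-((φ k x)^2)).re := by
        rw [h2, Complex.mul_conj]
        simp [Complex.normSq_eq_norm_sq, ← Complex.ofReal_pow]
      rw [h3, ← hform k x]
    rw [intervalIntegral.integral_congr (g := fun x : ℝ =>
        (-(((Complex.exp (-(ω^2*(t k : ℝ))) - Complex.exp (-(ω*(t k : ℝ)))) * Complex.exp (-((t k : ℝ):ℂ) * x)
        + (Complex.exp (-((t k : ℝ):ℂ)) - Complex.exp (-(ω^2*(t k : ℝ)))) * Complex.exp (-(ω*(t k : ℝ)) * x)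
        + (Complex.exp (-(ω*(t k : ℝ))) - Complex.exp (-((t k : ℝ):ℂ))) * Complex.exp (-(ω^2*(t k : ℝ)) * x))^2)).re)
      (fun x _ => hpt x)]
    rw [int_re0 _ (by fun_prop)]
    congr 1
    rw [intervalIntegral.integral_neg]
    congr 1
    have h00 : -((t k : ℝ):ℂ) + -((t k : ℝ):ℂ) ≠ 0 := by
      intro h; apply htkC; linear_combination (-1/2 : ℂ) * h
    have h11 : -(ω*((t k : ℝ):ℂ)) + -(ω*((t k : ℝ):ℂ)) ≠ 0 := by
      intro h; apply mul_ne_zero hω0 htkC; linear_combination (-1/2 : ℂ) * h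
    have h22 : -(ω^2*((t k : ℝ):ℂ)) + -(ω^2*((t k : ℝ):ℂ)) ≠ 0 := by
      intro h; apply mul_ne_zero (pow_ne_zero 2 hω0) htkC; linear_combination (-1/2 : ℂ) * h
    have h01 : -((t k : ℝ):ℂ) + -(ω*((t k : ℝ):ℂ)) ≠ 0 := by
      intro h; apply mul_ne_zero (pow_ne_zero 2 hω0) htkC
      linear_combination ((t k : ℝ):ℂ) * hωs + h
    have h02 : -((t k : ℝ):ℂ) + -(ω^2*((t k : ℝ):ℂ)) ≠ 0 := by
      intro h; apply mul_ne_zero hω0 htkC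
      linear_combination ((t k : ℝ):ℂ) * hωs + h
    have h12 : -(ω*((t k : ℝ):ℂ)) + -(ω^2*((t k : ℝ):ℂ)) ≠ 0 := by
      intro h; apply htkC
      linear_combination ((t k : ℝ):ℂ) * hωs + h
    rw [sq_int _ _ _ _ _ _ h00 h11 h22 h01 h02 h12]
    simp only [Sval]
  constructor
  · -- part 1
    intro k
    rw [intervalIntegral.integral_congr
      (g := fun x : ℝ => ‖φ k (1-x)‖^2) (fun x _ => by rw [hψform k x, norm_neg])]
    have h := intervalIntegral.integral_comp_sub_left (a := (0:ℝ)) (b := (1:ℝ))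
      (fun x => ‖φ k x‖^2) 1
    simpa using h
  · -- part 2
    obtain ⟨C, hC⟩ := hasymp.bound
    set C1 := max C 1 with hC1def
    have hC1pos : (0:ℝ) < C1 := lt_of_lt_of_le one_pos (le_max_right _ _)
    have hε : ∀ᶠ k : ℕ in atTop,
        |t k - 2*π/Real.sqrt 3*((k:ℝ)+1/6)| ≤ C1 * Real.exp (-(Real.sqrt 3)*π*(k:ℝ)) := by
      filter_upwards [hC] with k hk
      have e1 : -Complex.I * σ k - ((2*π/Real.sqrt 3*((k:ℝ)+1/6) : ℝ):ℂ)
          = (((t k - 2*π/Real.sqrt 3*((k:ℝ)+1/6) : ℝ)):ℂ) := by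
        rw [hσk k]
        push_cast
        linear_combination (-((t k:ℝ):ℂ)) * hIsq
      rw [e1, Complex.norm_real, Real.norm_eq_abs, Real.norm_eq_abs,
        abs_of_pos (Real.exp_pos _)] at hk
      calc |t k - 2*π/Real.sqrt 3*((k:ℝ)+1/6)| ≤ C * Real.exp (-(Real.sqrt 3)*π*(k:ℝ)) := hk
        _ ≤ C1 * Real.exp (-(Real.sqrt 3)*π*(k:ℝ)) :=
            mul_le_mul_of_nonneg_right (le_max_left _ _) (Real.exp_pos _).le
    have hsq3 : Real.sqrt 3 * Real.sqrt 3 = 3 := Real.mul_self_sqrt (by norm_num)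
    have hs3pos : (0:ℝ) < Real.sqrt 3 := Real.sqrt_pos.mpr (by norm_num)
    have hπpos := Real.pi_pos
    have hπ3 : 3 < π := Real.pi_gt_three
    have hπ4 : π ≤ 4 := Real.pi_le_four
    have hs3le2 : Real.sqrt 3 ≤ 2 := by nlinarith
    have hs3ge1 : 1 ≤ Real.sqrt 3 := by nlinarith
    have hL3 : 3 ≤ 2*π/Real.sqrt 3 := by
      rw [le_div_iff₀ hs3pos]; nlinarith
    have hL8 : 2*π/Real.sqrt 3 ≤ 8 := by
      rw [div_le_iff₀ hs3pos]; nlinarith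
    have hLsπ : 2*π/Real.sqrt 3 ≤ Real.sqrt 3 * π := by
      rw [div_le_iff₀ hs3pos]; nlinarith
    rw [isBigO_iff]
    refine ⟨(60 + 8*C1) * Real.exp 3, ?_⟩
    filter_upwards [hε, eventually_ge_atTop 1,
      (tendsto_natCast_atTop_atTop (R := ℝ)).eventually_ge_atTop (4*C1)] with k hεk hk1 hkC
    have hk1' : (1:ℝ) ≤ (k:ℝ) := by exact_mod_cast hk1
    have hk0' : (0:ℝ) < (k:ℝ) := by linarith
    have hεb : C1 * Real.exp (-(Real.sqrt 3)*π*(k:ℝ)) ≤ 1/4 := by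
      have h1 : Real.exp (-(Real.sqrt 3)*π*(k:ℝ)) ≤ Real.exp (-(k:ℝ)) := by
        apply Real.exp_le_exp.mpr
        nlinarith
      have h2 : Real.exp (-(k:ℝ)) ≤ 1/(1+(k:ℝ)) := by
        rw [Real.exp_neg]
        rw [inv_eq_one_div]
        apply one_div_le_one_div_of_le (by positivity)
        linarith [Real.add_one_le_exp (k:ℝ)]
      calc C1 * Real.exp (-(Real.sqrt 3)*π*(k:ℝ)) ≤ C1 * (1/(1+(k:ℝ))) := by
            exact mul_le_mul_of_nonneg_left (h1.trans h2) hC1pos.le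
        _ ≤ 1/4 := by
            rw [mul_one_div, div_le_div_iff₀ (by positivity) (by norm_num)]
            linarith
    have hεq : |t k - 2*π/Real.sqrt 3*((k:ℝ)+1/6)| ≤ 1/4 := hεk.trans hεb
    obtain ⟨hεlo, hεhi⟩ := abs_le.mp hεq
    have hTk3 : 3*((k:ℝ)+1/6) ≤ 2*π/Real.sqrt 3*((k:ℝ)+1/6) := by
      apply mul_le_mul_of_nonneg_right hL3 (by positivity)
    have hTk1 : 1 ≤ 2*π/Real.sqrt 3*((k:ℝ)+1/6) := by nlinarith
    have htlow : (k:ℝ) ≤ t k := by nlinarith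
    have ht1 : 1 ≤ t k := by nlinarith
    have htup : t k ≤ 2*π/Real.sqrt 3*((k:ℝ)+1/6) + 1/4 := by nlinarith
    have ht0 : (0:ℝ) < t k := htk0 k
    have hmainEq : 3*Real.sqrt 3*Real.exp ((4*π/Real.sqrt 3)*((k:ℝ)+1/6))/(4*π*((k:ℝ)+1/6))
        = 3/2*Real.exp (2*(2*π/Real.sqrt 3*((k:ℝ)+1/6)))/(2*π/Real.sqrt 3*((k:ℝ)+1/6)) := by
      rw [show (4*π/Real.sqrt 3)*((k:ℝ)+1/6) = 2*(2*π/Real.sqrt 3*((k:ℝ)+1/6)) by ring]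
      rw [div_eq_div_iff (by positivity) (by positivity)]
      field_simp
      ring
    have hA : |(∫ x in (0:ℝ)..1, ‖φ k x‖^2) - 3/2*Real.exp (2*(t k))/(t k)|
        ≤ 60*Real.exp (t k)/(t k) := by
      rw [hInt k]
      have hb := main_est ω hω3 hωs hre hre2 habs (t k) ht1
      have heq : (-(Sval ω (t k))).re - 3/2*Real.exp (2*(t k))/(t k)
          = -((Sval ω (t k) + 3/2*((Real.exp (2*(t k)):ℝ):ℂ)/((t k:ℝ):ℂ)).re) := by
        rw [show (3/2:ℂ)*((Real.exp (2*(t k)):ℝ):ℂ)/((t k:ℝ):ℂ)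
            = (((3/2*Real.exp (2*(t k))/(t k)):ℝ):ℂ) by push_cast; ring]
        rw [Complex.add_re, Complex.ofReal_re, Complex.neg_re]
        ring
      rw [heq, abs_neg]
      exact (Complex.abs_re_le_abs _).trans hb
    have hB : |3/2*Real.exp (2*(t k))/(t k)
          - 3/2*Real.exp (2*(2*π/Real.sqrt 3*((k:ℝ)+1/6)))/(2*π/Real.sqrt 3*((k:ℝ)+1/6))|
        ≤ 8*Real.exp (2*(2*π/Real.sqrt 3*((k:ℝ)+1/6)))
            * |t k - 2*π/Real.sqrt 3*((k:ℝ)+1/6)|/(t k) := by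
      set Tk := 2*π/Real.sqrt 3*((k:ℝ)+1/6) with hTkdef
      have hTk0 : (0:ℝ) < Tk := by linarith
      have hsplit : 3/2*Real.exp (2*(t k))/(t k) - 3/2*Real.exp (2*Tk)/Tk
          = 3/2*(Real.exp (2*(t k)) - Real.exp (2*Tk))/(t k)
            + 3/2*Real.exp (2*Tk)*(Tk - t k)/(t k*Tk) := by
        field_simp
        ring
      have hexp : |Real.exp (2*(t k)) - Real.exp (2*Tk)|
          ≤ 4*Real.exp (2*Tk)*|t k - Tk| := by
        have hfac : Real.exp (2*(t k)) = Real.exp (2*Tk) * Real.exp (2*(t k - Tk)) := by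
          rw [← Real.exp_add]
          congr 1
          ring
        have h2ε : |2*(t k - Tk)| ≤ 1 := by
          rw [abs_mul, abs_two]
          nlinarith [hεq]
        calc |Real.exp (2*(t k)) - Real.exp (2*Tk)|
            = |Real.exp (2*Tk) * (Real.exp (2*(t k - Tk)) - 1)| := by
              rw [hfac]
              congr 1
              ring
          _ = Real.exp (2*Tk) * |Real.exp (2*(t k - Tk)) - 1| := by
              rw [abs_mul, abs_of_pos (Real.exp_pos _)]
          _ ≤ Real.exp (2*Tk) * (2*|2*(t k - Tk)|) := by
              exact mul_le_mul_of_nonneg_left (Real.abs_exp_sub_one_le h2ε) (Real.exp_pos _).le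
          _ = 4*Real.exp (2*Tk)*|t k - Tk| := by
              rw [abs_mul, abs_two]
              ring
      calc |3/2*Real.exp (2*(t k))/(t k) - 3/2*Real.exp (2*Tk)/Tk|
          ≤ 3/2*|Real.exp (2*(t k)) - Real.exp (2*Tk)|/(t k)
            + 3/2*Real.exp (2*Tk)*|t k - Tk|/(t k*Tk) := by
            rw [hsplit]
            refine (abs_add_le _ _).trans ?_
            gcongr ?_ + ?_
            · rw [abs_div, abs_of_pos ht0, abs_mul, abs_of_nonneg (by norm_num : (0:ℝ) ≤ 3/2)]
            · rw [abs_div, abs_of_pos (by positivity : (0:ℝ) < t k * Tk), abs_mul, abs_mul,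
                abs_of_nonneg (by norm_num : (0:ℝ) ≤ 3/2),
                abs_of_pos (Real.exp_pos _), abs_sub_comm]
      _ ≤ 3/2*(4*Real.exp (2*Tk)*|t k - Tk|)/(t k)
            + 3/2*Real.exp (2*Tk)*|t k - Tk|/(t k*1) := by
            gcongr
      _ = 15/2*Real.exp (2*Tk)*|t k - Tk|/(t k) := by
            ring
      _ ≤ 8*Real.exp (2*Tk)*|t k - Tk|/(t k) := by
            gcongr
            norm_num
    rw [Real.norm_eq_abs, Real.norm_eq_abs,
      abs_of_pos (show (0:ℝ) < Real.exp (2*π/Real.sqrt 3*(k:ℝ))/(k:ℝ) by positivity)]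
    have htri : |(∫ x in (0:ℝ)..1, ‖φ k x‖^2)
          - 3*Real.sqrt 3*Real.exp ((4*π/Real.sqrt 3)*((k:ℝ)+1/6))/(4*π*((k:ℝ)+1/6))|
        ≤ 60*Real.exp (t k)/(t k)
          + 8*Real.exp (2*(2*π/Real.sqrt 3*((k:ℝ)+1/6)))
              * |t k - 2*π/Real.sqrt 3*((k:ℝ)+1/6)|/(t k) := by
      rw [hmainEq]
      exact (abs_sub_le _ _ _).trans (add_le_add hA hB)
    refine htri.trans ?_
    have h60 : 60*Real.exp (t k)/(t k)
        ≤ 60*Real.exp 3*(Real.exp (2*π/Real.sqrt 3*(k:ℝ))/(k:ℝ)) := by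
      have he : Real.exp (t k) ≤ Real.exp 3 * Real.exp (2*π/Real.sqrt 3*(k:ℝ)) := by
        rw [← Real.exp_add]
        apply Real.exp_le_exp.mpr
        nlinarith
      calc 60*Real.exp (t k)/(t k)
          ≤ 60*(Real.exp 3*Real.exp (2*π/Real.sqrt 3*(k:ℝ)))/(k:ℝ) := by gcongr
        _ = 60*Real.exp 3*(Real.exp (2*π/Real.sqrt 3*(k:ℝ))/(k:ℝ)) := by ring
    have h8 : 8*Real.exp (2*(2*π/Real.sqrt 3*((k:ℝ)+1/6)))
          * |t k - 2*π/Real.sqrt 3*((k:ℝ)+1/6)|/(t k)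
        ≤ 8*C1*Real.exp 3*(Real.exp (2*π/Real.sqrt 3*(k:ℝ))/(k:ℝ)) := by
      have h2T : Real.exp (2*(2*π/Real.sqrt 3*((k:ℝ)+1/6)))
          ≤ Real.exp 3 * Real.exp (2*(2*π/Real.sqrt 3)*(k:ℝ)) := by
        rw [← Real.exp_add]
        apply Real.exp_le_exp.mpr
        nlinarith
      calc 8*Real.exp (2*(2*π/Real.sqrt 3*((k:ℝ)+1/6)))
            * |t k - 2*π/Real.sqrt 3*((k:ℝ)+1/6)|/(t k)
          ≤ 8*(Real.exp 3*Real.exp (2*(2*π/Real.sqrt 3)*(k:ℝ)))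
              * (C1*Real.exp (-(Real.sqrt 3)*π*(k:ℝ)))/(k:ℝ) := by
            gcongr
        _ = 8*C1*Real.exp 3
              * ((Real.exp (2*(2*π/Real.sqrt 3)*(k:ℝ))*Real.exp (-(Real.sqrt 3)*π*(k:ℝ)))/(k:ℝ)) := by
            ring
        _ ≤ 8*C1*Real.exp 3*(Real.exp (2*π/Real.sqrt 3*(k:ℝ))/(k:ℝ)) := by
            gcongr
            rw [← Real.exp_add]
            apply Real.exp_le_exp.mpr
            nlinarith [mul_nonneg (sub_nonneg.mpr hLsπ) hk0'.le]
    linarith [h60, h8]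
end

section
/- Let ω = e^{2πi/3} and β ∈ (-1,0). The purely imaginary-shifted zeros of Δ^β(ρ) = iρ(ω-ω²)[Σ_{r=0}^{2}ω^r e^{iω^r ρ} - β Σ_{r=0}^{2}ω^r e^{-iω^r ρ}] admit the asymptotic description: there is a sequence of zeros σ_k with σ_k = (k - 1/3)π + i log(-β) + O(e^{-√3 kπ/2}) for k even and σ_k = (-k - 2/3)π + i log(-β) + O(e^{-√3 kπ/2}) for k odd, as k → ∞. -/
open Filter Asymptotics Complex Set Metric
open scoped Real NNReal
set_option maxHeartbeats 4000000

lemma log_lip : ∀ u ∈ closedBall (1:ℂ) (1/2), ∀ v ∈ closedBall (1:ℂ) (1/2),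
    ‖Complex.log u - Complex.log v‖ ≤ 2 * ‖u - v‖ := by
  have h : ∀ x ∈ closedBall (1:ℂ) (1/2), HasDerivWithinAt Complex.log x⁻¹ (closedBall (1:ℂ) (1/2)) x := by
    intro x hx
    have hre : (1:ℝ)/2 ≤ x.re := by
      have h1 : ‖x - 1‖ ≤ 1/2 := by simpa [mem_closedBall_iff_norm, dist_eq_norm] using hx
      have h2 : |(x - 1).re| ≤ ‖x - 1‖ := Complex.abs_re_le_norm _
      have : (x - 1).re = x.re - 1 := by simp
      rw [this] at h2
      cases abs_le.1 h2 with
      | intro a b => linarith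
    refine (Complex.hasDerivAt_log ?_).hasDerivWithinAt
    exact Complex.mem_slitPlane_iff.2 (Or.inl (by linarith))
  intro u hu v hv
  have bound : ∀ x ∈ closedBall (1:ℂ) (1/2), ‖(x⁻¹ : ℂ)‖ ≤ 2 := by
    intro x hx
    have h1 : ‖x - 1‖ ≤ 1/2 := by simpa [mem_closedBall_iff_norm, dist_eq_norm] using hx
    have h2 : (1:ℝ)/2 ≤ ‖x‖ := by
      have h3 : (1:ℝ) ≤ ‖x‖ + ‖x - 1‖ := by
        calc (1:ℝ) = ‖(1:ℂ)‖ := by simp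
          _ = ‖x + (1 - x)‖ := by norm_num
          _ ≤ ‖x‖ + ‖1 - x‖ := norm_add_le _ _
          _ = ‖x‖ + ‖x - 1‖ := by rw [norm_sub_rev]
      linarith
    rw [norm_inv]
    rw [inv_le_comm₀ (by linarith) (by norm_num)]
    linarith
  simpa using (convex_closedBall (1:ℂ) (1/2)).norm_image_sub_le_of_norm_hasDerivWithin_le
    h bound hv hu

lemma exists_root (φ : ℂ → ℂ) (ε : ℝ) (hε : ε ≤ 1/100)
    (hb : ∀ z ∈ closedBall (0:ℂ) (1/2), ‖φ z‖ ≤ ε)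
    (hlip : LipschitzOnWith (1/8 : ℝ≥0) φ (closedBall (0:ℂ) (1/2))) :
    ∃ z : ℂ, ‖z‖ ≤ 2 * ε ∧ Complex.exp (-(Complex.I * z)) = 1 + φ z := by
  have hε0 : 0 ≤ ε := le_trans (norm_nonneg _) (hb 0 (by simp))
  set B := closedBall (0:ℂ) (1/2) with hB
  set G : ℂ → ℂ := fun z => Complex.I * Complex.log (1 + φ z) with hGdef
  have hmemB : ∀ z ∈ B, ‖φ z‖ ≤ ε := hb
  have hGnorm : ∀ z ∈ B, ‖G z‖ ≤ (3/2) * ε := by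
    intro z hz
    have h1 : ‖φ z‖ ≤ ε := hb z hz
    have h2 : ‖Complex.log (1 + φ z)‖ ≤ (3/2) * ‖φ z‖ :=
      Complex.norm_log_one_add_half_le_self (by linarith)
    calc ‖G z‖ = ‖Complex.log (1 + φ z)‖ := by
          show ‖Complex.I * Complex.log (1 + φ z)‖ = _
          rw [norm_mul, Complex.norm_I, one_mul]
      _ ≤ (3/2) * ‖φ z‖ := h2
      _ ≤ (3/2) * ε := by linarith
  have hm : MapsTo G B B := by
    intro z hz
    simp only [hB, mem_closedBall_zero_iff]
    calc ‖G z‖ ≤ (3/2)*ε := hGnorm z hz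
      _ ≤ 1/2 := by linarith
  have hmem1 : ∀ z ∈ B, 1 + φ z ∈ closedBall (1:ℂ) (1/2) := by
    intro z hz
    simp only [mem_closedBall_iff_norm, add_sub_cancel_left]
    linarith [hb z hz]
  have hG : LipschitzOnWith (1/4 : ℝ≥0) G B := by
    rw [lipschitzOnWith_iff_norm_sub_le]
    intro x hx y hy
    have h1 := log_lip _ (hmem1 x hx) _ (hmem1 y hy)
    have h2 : ‖(1 + φ x) - (1 + φ y)‖ = ‖φ x - φ y‖ := by ring_nf
    have h3 : ‖φ x - φ y‖ ≤ (1/8 : ℝ) * ‖x - y‖ := by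
      have := (lipschitzOnWith_iff_norm_sub_le.1 hlip) hx hy
      simpa using this
    calc ‖G x - G y‖ = ‖Complex.log (1 + φ x) - Complex.log (1 + φ y)‖ := by
          rw [hGdef]; rw [← mul_sub]; simp
      _ ≤ 2 * ‖(1 + φ x) - (1 + φ y)‖ := h1
      _ = 2 * ‖φ x - φ y‖ := by rw [h2]
      _ ≤ 2 * ((1/8) * ‖x - y‖) := by linarith
      _ ≤ (1/4 : ℝ≥0) * ‖x - y‖ := by push_cast; linarith [norm_nonneg (x - y)]
  have hcontr : ContractingWith (1/4 : ℝ≥0) (hm.restrict G B B) :=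
    ⟨by rw [← NNReal.coe_lt_coe]; norm_num, hm.lipschitzOnWith_iff_restrict.1 hG⟩
  have h0B : (0:ℂ) ∈ B := mem_closedBall_zero_iff.2 (by norm_num)
  obtain ⟨y, hyB, hfix, -, -⟩ := hcontr.exists_fixedPoint'
    (isClosed_closedBall.isComplete) hm h0B (edist_ne_top _ _)
  refine ⟨y, ?_, ?_⟩
  · calc ‖y‖ = ‖G y‖ := by rw [hfix]
      _ ≤ (3/2)*ε := hGnorm y hyB
      _ ≤ 2*ε := by linarith
  · have hne : 1 + φ y ≠ 0 := by
      intro h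
      have : ‖φ y‖ ≤ ε := hb y hyB
      have h2 : φ y = -1 := by linear_combination h
      rw [h2] at this; simp at this; linarith
    have : -(Complex.I * y) = Complex.log (1 + φ y) := by
      conv_lhs => rw [← hfix]
      show -(Complex.I * (Complex.I * Complex.log (1 + φ y))) = _
      rw [← mul_assoc, Complex.I_mul_I]; ring
    rw [this, Complex.exp_log hne]

noncomputable def gfun (β : ℝ) (μ t : ℂ) : ℂ → ℂ := fun z =>
  Complex.exp (Complex.I*(t+z)) - β * Complex.exp (-(Complex.I*(t+z)))
  + μ * Complex.exp (Complex.I*μ*(t+z)) - β*μ^2 * Complex.exp (-(Complex.I*μ^2*(t+z)))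

noncomputable def gfun' (β : ℝ) (μ t : ℂ) : ℂ → ℂ := fun z =>
  Complex.I * Complex.exp (Complex.I*(t+z)) - β * (-Complex.I * Complex.exp (-(Complex.I*(t+z))))
  + μ * (Complex.I*μ * Complex.exp (Complex.I*μ*(t+z)))
  - β*μ^2 * (-(Complex.I*μ^2) * Complex.exp (-(Complex.I*μ^2*(t+z))))

noncomputable def phifun (β : ℝ) (μ t : ℂ) : ℂ → ℂ := fun z =>
  -((β:ℂ)*μ)⁻¹ * (gfun β μ t z * Complex.exp (Complex.I*μ*(t+z)))

noncomputable def phifun' (β : ℝ) (μ t : ℂ) : ℂ → ℂ := fun z =>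
  -((β:ℂ)*μ)⁻¹ * (gfun' β μ t z * Complex.exp (Complex.I*μ*(t+z))
    + gfun β μ t z * (Complex.I*μ * Complex.exp (Complex.I*μ*(t+z))))


lemma hdc (c t : ℂ) (z : ℂ) :
    HasDerivAt (fun z => Complex.exp (c*(t+z))) (c * Complex.exp (c*(t+z))) z := by
  have h : HasDerivAt (fun z : ℂ => c*(t+z)) c z := by
    simpa using ((hasDerivAt_id z).const_add t).const_mul c
  simpa [mul_comm] using h.cexp

lemma hdcn (c t : ℂ) (z : ℂ) :
    HasDerivAt (fun z => Complex.exp (-(c*(t+z)))) (-c * Complex.exp (-(c*(t+z)))) z := by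
  have h : HasDerivAt (fun z : ℂ => -(c*(t+z))) (-c) z := by
    convert (((hasDerivAt_id' z).const_add t).const_mul c).neg using 1 <;> first | rfl | simp
  simpa [mul_comm] using h.cexp

lemma hasDerivAt_gfun (β : ℝ) (μ t : ℂ) (z : ℂ) :
    HasDerivAt (gfun β μ t) (gfun' β μ t z) z := by
  unfold gfun gfun'
  exact (((hdc Complex.I t z).sub ((hdcn Complex.I t z).const_mul (β:ℂ))).add
    ((hdc (Complex.I*μ) t z).const_mul μ)).sub
    ((hdcn (Complex.I*μ^2) t z).const_mul ((β:ℂ)*μ^2))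

lemma hasDerivAt_phifun (β : ℝ) (μ t : ℂ) (z : ℂ) :
    HasDerivAt (phifun β μ t) (phifun' β μ t z) z := by
  unfold phifun phifun'
  exact ((hasDerivAt_gfun β μ t z).mul (hdc (Complex.I*μ) t z)).const_mul (-((β:ℂ)*μ)⁻¹)

lemma branch (β : ℝ) (hβ : β ∈ Set.Ioo (-1:ℝ) 0) (μ t : ℂ)
    (hμabs : ‖μ‖ = 1) (hμ1 : 1 + μ + μ^2 = 0)
    (hct : μ * Complex.exp (-(Complex.I*t)) = (β:ℂ))
    (E : ℝ)
    (h1 : ((-(Complex.I*μ^2))*t).re ≤ -E)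
    (h2 : ((Complex.I*(μ-1))*t).re ≤ -E)
    (h3 : ((2*Complex.I*μ)*t).re ≤ -E)
    (h4 : ((Complex.I*(μ-μ^2))*t).re ≤ -E)
    (hsmall : 8 * Real.exp 1 / (-β) * Real.exp (-E) ≤ 1/100) :
    ∃ ρ : ℂ, ‖ρ - t‖ ≤ 16 * Real.exp 1 / (-β) * Real.exp (-E) ∧
      Complex.exp (Complex.I*ρ) - β * Complex.exp (-(Complex.I*ρ))
      + μ * Complex.exp (Complex.I*μ*ρ) - β*μ^2 * Complex.exp (-(Complex.I*μ^2*ρ))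
      + μ^2 * Complex.exp (Complex.I*μ^2*ρ) - β*μ * Complex.exp (-(Complex.I*μ*ρ)) = 0 := by
  obtain ⟨hβ1, hβ0⟩ := hβ
  have hbpos : (0:ℝ) < -β := by linarith
  have hble : -β ≤ 1 := by linarith
  set ε : ℝ := 8 * Real.exp 1 / (-β) * Real.exp (-E) with hε
  have hεpos : 0 < ε := by positivity
  -- norm of (β μ)⁻¹
  have hβc : ‖((β:ℂ))‖ = -β := by
    rw [Complex.norm_real, Real.norm_eq_abs, abs_of_neg hβ0]
  have hβμ : ‖((β:ℂ)*μ)‖ = -β := by rw [norm_mul, hμabs, mul_one, hβc]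
  have hβμne : ((β:ℂ)*μ) ≠ 0 := by
    intro h; rw [h, norm_zero] at hβμ; linarith
  have hinv : ‖(-((β:ℂ)*μ)⁻¹)‖ = (-β)⁻¹ := by rw [norm_neg, norm_inv, hβμ]
  -- the key per-term bound
  have hterm : ∀ (u v d : ℂ), u + v = d*(t+ (u+v-u-v+0)) → True → True → True := fun _ _ _ _ _ _ => trivial
  clear hterm
  have hterm : ∀ (z u v d : ℂ), ‖z‖ ≤ 1/2 → u + v = d*(t+z) → (d*t).re ≤ -E → ‖d‖ ≤ 2 →
      ‖Complex.exp u‖ * ‖Complex.exp v‖ ≤ Real.exp (1-E) := by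
    intro z u v d hz huv hd hdn
    rw [Complex.norm_exp, Complex.norm_exp,
      ← Real.exp_add]
    apply Real.exp_le_exp.2
    have e1 : u.re + v.re = (d*(t+z)).re := by rw [← Complex.add_re, huv]
    have e2 : (d*(t+z)).re = (d*t).re + (d*z).re := by rw [mul_add, Complex.add_re]
    have e3 : (d*z).re ≤ 1 := by
      have r1 : (d*z).re ≤ ‖d*z‖ := Complex.re_le_norm _
      have r2 : ‖d*z‖ ≤ 1 := by
        rw [norm_mul]
        have : ‖d‖ ≤ 2 := by exact hdn
        have hz' : ‖z‖ ≤ 1/2 := by exact hz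
        nlinarith [norm_nonneg d, norm_nonneg z]
      linarith
    rw [e1, e2]; linarith
  -- bounds on the four exponentials paired with the big factor
  have hl : ∀ z : ℂ, ‖z‖ ≤ 1/2 →
      ‖Complex.exp (Complex.I*(t+z))‖ * ‖Complex.exp (Complex.I*μ*(t+z))‖ ≤ Real.exp (1-E) ∧
      ‖Complex.exp (-(Complex.I*(t+z)))‖ * ‖Complex.exp (Complex.I*μ*(t+z))‖ ≤ Real.exp (1-E) ∧
      ‖Complex.exp (Complex.I*μ*(t+z))‖ * ‖Complex.exp (Complex.I*μ*(t+z))‖ ≤ Real.exp (1-E) ∧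
      ‖Complex.exp (-(Complex.I*μ^2*(t+z)))‖ * ‖Complex.exp (Complex.I*μ*(t+z))‖ ≤ Real.exp (1-E) := by
    intro z hz
    have hIμ : ‖Complex.I*μ‖ = 1 := by rw [norm_mul, Complex.norm_I, one_mul, hμabs]
    refine ⟨?_, ?_, ?_, ?_⟩
    · refine hterm z _ _ (-(Complex.I*μ^2)) hz (by linear_combination (Complex.I*(t+z)) * hμ1) h1 ?_
      rw [norm_neg, norm_mul, Complex.norm_I, one_mul, norm_pow, hμabs]; norm_num
    · refine hterm z _ _ (Complex.I*(μ-1)) hz (by ring) h2 ?_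
      rw [norm_mul, Complex.norm_I, one_mul]
      calc ‖μ - 1‖ ≤ ‖μ‖ + ‖(1:ℂ)‖ := norm_sub_le _ _
        _ ≤ 2 := by rw [hμabs, norm_one]; norm_num
    · refine hterm z _ _ (2*Complex.I*μ) hz (by ring) h3 ?_
      rw [show (2*Complex.I*μ) = (2:ℂ)*(Complex.I*μ) by ring, norm_mul, hIμ]
      simp
    · refine hterm z _ _ (Complex.I*(μ-μ^2)) hz (by ring) h4 ?_
      rw [norm_mul, Complex.norm_I, one_mul]
      calc ‖μ - μ^2‖ ≤ ‖μ‖ + ‖μ^2‖ := norm_sub_le _ _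
        _ ≤ 2 := by rw [hμabs, norm_pow, hμabs]; norm_num
  -- combined bound lemma for gfun and gfun'
  have hgboth : ∀ z : ℂ, ‖z‖ ≤ 1/2 →
      ‖gfun β μ t z‖ * ‖Complex.exp (Complex.I*μ*(t+z))‖ ≤ 4 * Real.exp (1-E) ∧
      ‖gfun' β μ t z‖ * ‖Complex.exp (Complex.I*μ*(t+z))‖ ≤ 4 * Real.exp (1-E) := by
    intro z hz
    obtain ⟨l1, l2, l3, l4⟩ := hl z hz
    set A1 := Complex.exp (Complex.I*(t+z)) with hA1
    set A2 := Complex.exp (-(Complex.I*(t+z))) with hA2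
    set A3 := Complex.exp (Complex.I*μ*(t+z)) with hA3
    set A4 := Complex.exp (-(Complex.I*μ^2*(t+z))) with hA4
    have hE0 : (0:ℝ) ≤ ‖A3‖ := norm_nonneg _
    have key : ∀ c1 c2 c3 c4 : ℂ, ‖c1‖ ≤ 1 → ‖c2‖ ≤ 1 → ‖c3‖ ≤ 1 → ‖c4‖ ≤ 1 →
        ‖c1*A1 - c2*A2 + c3*A3 - c4*A4‖ * ‖A3‖ ≤ 4 * Real.exp (1-E) := by
      intro c1 c2 c3 c4 hc1 hc2 hc3 hc4
      have t2 := norm_sub_le (c1*A1) (c2*A2)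
      have t1 := norm_add_le (c1*A1 - c2*A2) (c3*A3)
      have t0 := norm_sub_le (c1*A1 - c2*A2 + c3*A3) (c4*A4)
      have m1 : ‖c1*A1‖ ≤ ‖A1‖ := by
        rw [norm_mul]; exact mul_le_of_le_one_left (norm_nonneg _) hc1
      have m2 : ‖c2*A2‖ ≤ ‖A2‖ := by
        rw [norm_mul]; exact mul_le_of_le_one_left (norm_nonneg _) hc2
      have m3 : ‖c3*A3‖ ≤ ‖A3‖ := by
        rw [norm_mul]; exact mul_le_of_le_one_left (norm_nonneg _) hc3
      have m4 : ‖c4*A4‖ ≤ ‖A4‖ := by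
        rw [norm_mul]; exact mul_le_of_le_one_left (norm_nonneg _) hc4
      have hsum : ‖c1*A1 - c2*A2 + c3*A3 - c4*A4‖ ≤ ‖A1‖ + ‖A2‖ + ‖A3‖ + ‖A4‖ := by
        linarith
      have hmm := mul_le_mul_of_nonneg_right hsum hE0
      have hdist : (‖A1‖ + ‖A2‖ + ‖A3‖ + ‖A4‖) * ‖A3‖
          = ‖A1‖*‖A3‖ + ‖A2‖*‖A3‖ + ‖A3‖*‖A3‖ + ‖A4‖*‖A3‖ := by ring
      rw [hdist] at hmm
      linarith [l1, l2, l3, l4]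
    constructor
    · have hg : gfun β μ t z = (1:ℂ)*A1 - (β:ℂ)*A2 + μ*A3 - ((β:ℂ)*μ^2)*A4 := by
        unfold gfun; rw [hA1, hA2, hA3, hA4]; ring
      rw [hg]
      refine key 1 (β:ℂ) μ ((β:ℂ)*μ^2) (by simp) (by rw [hβc]; linarith) (by rw [hμabs])
        (by rw [norm_mul, hβc, norm_pow, hμabs]; nlinarith)
    · have hg : gfun' β μ t z = Complex.I*A1 - ((β:ℂ)*(-Complex.I))*A2 + (μ*(Complex.I*μ))*A3
          - ((β:ℂ)*μ^2*(-(Complex.I*μ^2)))*A4 := by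
        unfold gfun'; rw [hA1, hA2, hA3, hA4]; ring
      rw [hg]
      refine key _ _ _ _ (by simp) ?_ ?_ ?_ <;>
        · simp only [norm_mul, norm_neg, norm_pow, Complex.norm_I, hβc, hμabs]
          norm_num <;> linarith
  have hexpconv : Real.exp (1-E) = Real.exp 1 * Real.exp (-E) := by
    rw [← Real.exp_add]; ring_nf
  -- bound on phifun
  have hφb : ∀ z ∈ closedBall (0:ℂ) (1/2), ‖phifun β μ t z‖ ≤ ε := by
    intro z hz
    rw [mem_closedBall_zero_iff] at hz
    obtain ⟨hg1, -⟩ := hgboth z hz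
    show ‖-((β:ℂ)*μ)⁻¹ * (gfun β μ t z * Complex.exp (Complex.I*μ*(t+z)))‖ ≤ ε
    rw [norm_mul, hinv, norm_mul]
    rw [hexpconv] at hg1
    rw [hε, div_mul_eq_mul_div, div_eq_mul_inv, mul_comm (8 * Real.exp 1 * Real.exp (-E)) (-β)⁻¹]
    apply mul_le_mul_of_nonneg_left _ (by positivity)
    nlinarith [Real.exp_pos (-E), Real.exp_pos 1]
  -- bound on phifun'
  have hφb' : ∀ z ∈ closedBall (0:ℂ) (1/2), ‖phifun' β μ t z‖ ≤ ε := by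
    intro z hz
    rw [mem_closedBall_zero_iff] at hz
    obtain ⟨hg1, hg2⟩ := hgboth z hz
    have hIμ : ‖Complex.I*μ‖ = 1 := by rw [norm_mul, Complex.norm_I, one_mul, hμabs]
    show ‖-((β:ℂ)*μ)⁻¹ * (gfun' β μ t z * Complex.exp (Complex.I*μ*(t+z))
      + gfun β μ t z * (Complex.I*μ * Complex.exp (Complex.I*μ*(t+z))))‖ ≤ ε
    rw [norm_mul, hinv]
    have p1 : ‖gfun' β μ t z * Complex.exp (Complex.I*μ*(t+z))‖ ≤ 4 * Real.exp (1-E) := by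
      rw [norm_mul]; exact hg2
    have p2 : ‖gfun β μ t z * (Complex.I*μ * Complex.exp (Complex.I*μ*(t+z)))‖ ≤ 4 * Real.exp (1-E) := by
      rw [norm_mul, norm_mul, hIμ, one_mul]; exact hg1
    have big : ‖gfun' β μ t z * Complex.exp (Complex.I*μ*(t+z))
        + gfun β μ t z * (Complex.I*μ * Complex.exp (Complex.I*μ*(t+z)))‖ ≤ 8 * Real.exp (1-E) := by
      have := norm_add_le (gfun' β μ t z * Complex.exp (Complex.I*μ*(t+z)))
        (gfun β μ t z * (Complex.I*μ * Complex.exp (Complex.I*μ*(t+z))))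
      linarith
    rw [hexpconv] at big
    rw [hε, div_mul_eq_mul_div, div_eq_mul_inv, mul_comm (8 * Real.exp 1 * Real.exp (-E)) (-β)⁻¹]
    apply mul_le_mul_of_nonneg_left _ (by positivity)
    linarith
  -- apply exists_root
  have hlip : LipschitzOnWith (1/8 : ℝ≥0) (phifun β μ t) (closedBall (0:ℂ) (1/2)) := by
    apply (convex_closedBall (0:ℂ) (1/2)).lipschitzOnWith_of_nnnorm_hasDerivWithin_le
      (f' := phifun' β μ t)
      (fun x _ => (hasDerivAt_phifun β μ t x).hasDerivWithinAt)
    intro x hx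
    rw [← NNReal.coe_le_coe, coe_nnnorm]
    push_cast
    calc ‖phifun' β μ t x‖ ≤ ε := hφb' x hx
      _ ≤ 1/8 := by linarith
  obtain ⟨z, hznorm, hfix⟩ := exists_root (phifun β μ t) ε hsmall hφb hlip
  refine ⟨t + z, ?_, ?_⟩
  · rw [add_sub_cancel_left]
    calc ‖z‖ ≤ 2 * ε := hznorm
      _ = 16 * Real.exp 1 / (-β) * Real.exp (-E) := by rw [hε]; ring
  · -- algebra
    have hE1 : Complex.exp (-(Complex.I*t)) * Complex.exp (-(Complex.I*μ*(t+z)))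
        * Complex.exp (-(Complex.I*z)) = Complex.exp (Complex.I*μ^2*(t+z)) := by
      rw [← Complex.exp_add, ← Complex.exp_add]
      congr 1
      linear_combination (-(Complex.I*(t+z))) * hμ1
    have claim1 : (β:ℂ) * μ * Complex.exp (-(Complex.I*μ*(t+z))) * Complex.exp (-(Complex.I*z))
        = μ^2 * Complex.exp (Complex.I*μ^2*(t+z)) := by
      rw [← hct]
      linear_combination μ^2 * hE1
    have hEinv : Complex.exp (-(Complex.I*μ*(t+z))) * Complex.exp (Complex.I*μ*(t+z)) = 1 := by
      rw [← Complex.exp_add]; simp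
    have claim2 : (β:ℂ) * μ * Complex.exp (-(Complex.I*μ*(t+z))) * phifun β μ t z
        = -(gfun β μ t z) := by
      show (β:ℂ) * μ * Complex.exp (-(Complex.I*μ*(t+z)))
        * (-((β:ℂ)*μ)⁻¹ * (gfun β μ t z * Complex.exp (Complex.I*μ*(t+z)))) = _
      have hβne := left_ne_zero_of_mul hβμne
      have hμne := right_ne_zero_of_mul hβμne
      field_simp
      rw [mul_comm μ Complex.I]
      linear_combination -gfun β μ t z * hEinv
    unfold gfun at claim2
    linear_combination (-1:ℂ) * claim1 + claim2
      + ((β:ℂ)*μ*Complex.exp (-(Complex.I*μ*(t+z)))) * hfix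

theorem stmt7 (ω : ℂ) (hω : ω = Complex.exp (2 * π * Complex.I / 3))
    (β : ℝ) (hβ : β ∈ Set.Ioo (-1 : ℝ) 0)
    (Δ : ℂ → ℂ)
    (hΔ : ∀ ρ, Δ ρ = Complex.I * ρ * (ω - ω ^ 2) *
      ((∑ r ∈ Finset.range 3, ω ^ r * Complex.exp (Complex.I * ω ^ r * ρ))
        - β * ∑ r ∈ Finset.range 3, ω ^ r * Complex.exp (-Complex.I * ω ^ r * ρ))) :
    ∃ σ : ℕ → ℂ, (∀ k, Δ (σ k) = 0) ∧
      (fun k : ℕ => σ k -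
          ((if Even k then ((k : ℂ) - 1 / 3) * (π : ℂ) else (-(k : ℂ) - 2 / 3) * (π : ℂ))
            + Complex.I * (Real.log (-β) : ℂ)))
        =O[atTop] fun k : ℕ => Real.exp (-(Real.sqrt 3) * (k : ℝ) * π / 2) := by
  classical
  obtain ⟨hβ1, hβ0⟩ := id hβ
  have hb0 : (0:ℝ) < -β := by linarith
  have hb1 : -β < 1 := by linarith
  have hL : Real.log (-β) < 0 := Real.log_neg hb0 hb1
  have hπ : (0:ℝ) < π := Real.pi_pos
  have hs0 : (0:ℝ) < Real.sqrt 3 := Real.sqrt_pos.2 (by norm_num)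
  have hs33 : Real.sqrt 3 * Real.sqrt 3 = 3 := Real.mul_self_sqrt (by norm_num)
  set L : ℝ := Real.log (-β) with hLdef
  -- ω facts
  have hω' : ω = Complex.exp (((2*π/3:ℝ):ℂ) * Complex.I) := by
    rw [hω]; congr 1; push_cast; ring
  have hc23 : Real.cos (2*π/3) = -(1/2) := by
    rw [show (2*π/3 : ℝ) = π - π/3 by ring, Real.cos_pi_sub, Real.cos_pi_div_three]
  have hs23 : Real.sin (2*π/3) = Real.sqrt 3/2 := by
    rw [show (2*π/3 : ℝ) = π - π/3 by ring, Real.sin_pi_sub, Real.sin_pi_div_three]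
  have hωre : ω.re = -(1/2) := by rw [hω', Complex.exp_ofReal_mul_I_re, hc23]
  have hωim : ω.im = Real.sqrt 3/2 := by rw [hω', Complex.exp_ofReal_mul_I_im, hs23]
  have hωabs : ‖ω‖ = 1 := by
    rw [hω', Complex.norm_exp]
    simp
  have hω3 : ω^3 = 1 := by
    rw [hω', ← Complex.exp_nat_mul]
    rw [show (3:ℕ) * (((2*π/3:ℝ):ℂ) * Complex.I) = 2*(π:ℂ)*Complex.I by push_cast; ring]
    exact Complex.exp_two_pi_mul_I
  have hωne1 : ω ≠ 1 := by
    intro h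
    have : ω.im = 0 := by rw [h]; simp
    rw [hωim] at this
    nlinarith
  have hμ1 : 1 + ω + ω^2 = 0 := by
    have h : (ω - 1) * (1 + ω + ω^2) = 0 := by linear_combination hω3
    rcases mul_eq_zero.1 h with h' | h'
    · exact absurd (by linear_combination h' : ω = 1) hωne1
    · exact h'
  have h42 : (ω^2)^2 = ω := by linear_combination ω * hω3
  have hμ1' : 1 + ω^2 + (ω^2)^2 = 0 := by linear_combination hμ1 + h42
  have hω2abs : ‖ω^2‖ = 1 := by rw [norm_pow, hωabs]; norm_num
  have hω2re : (ω^2).re = -(1/2) := by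
    rw [pow_two, Complex.mul_re, hωre, hωim]; nlinarith
  have hω2im : (ω^2).im = -(Real.sqrt 3/2) := by
    rw [pow_two, Complex.mul_im, hωre, hωim]; ring
  -- constants
  set B₀ : ℝ := Real.sqrt 3*π/6 - (3/2)*L with hB0def
  set C : ℝ := 16 * Real.exp 1 / (-β) * Real.exp B₀ with hCdef
  -- smallness eventually
  have htend : Tendsto (fun k : ℕ =>
      8 * Real.exp 1 / (-β) * Real.exp (-(Real.sqrt 3*(k:ℝ)*π/2 - B₀))) atTop (nhds 0) := by
    have base : Tendsto (fun k : ℕ => (Real.sqrt 3*π/2) * (k:ℝ)) atTop atTop :=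
      Tendsto.const_mul_atTop (by positivity) tendsto_natCast_atTop_atTop
    have hneg : Tendsto (fun k : ℕ => B₀ + -((Real.sqrt 3*π/2) * (k:ℝ))) atTop atBot :=
      tendsto_atBot_add_const_left _ B₀ (tendsto_neg_atTop_atBot.comp base)
    have hcongr : Tendsto (fun k : ℕ => -(Real.sqrt 3*(k:ℝ)*π/2 - B₀)) atTop atBot := by
      apply hneg.congr
      intro k; ring
    have := (Real.tendsto_exp_atBot.comp hcongr).const_mul (8 * Real.exp 1 / (-β))
    simpa using this
  have hsmallEv : ∀ᶠ k : ℕ in atTop,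
      8 * Real.exp 1 / (-β) * Real.exp (-(Real.sqrt 3*(k:ℝ)*π/2 - B₀)) ≤ 1/100 :=
    htend.eventually_le_const (by norm_num)
  -- main eventual claim
  have hmain : ∀ᶠ k : ℕ in atTop, ∃ ρ : ℂ, Δ ρ = 0 ∧
      ‖ρ - ((if Even k then ((k : ℂ) - 1 / 3) * (π : ℂ) else (-(k : ℂ) - 2 / 3) * (π : ℂ))
            + Complex.I * (L : ℂ))‖ ≤ C * Real.exp (-(Real.sqrt 3) * (k : ℝ) * π / 2) := by
    filter_upwards [hsmallEv, eventually_ge_atTop 1] with k hsmall hk1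
    have hexpE : Real.exp (-(Real.sqrt 3*(k:ℝ)*π/2 - B₀))
        = Real.exp B₀ * Real.exp (-(Real.sqrt 3) * (k:ℝ) * π / 2) := by
      rw [← Real.exp_add]; congr 1; ring
    rcases Nat.even_or_odd k with he | ho
    · -- even case
      obtain ⟨m, hm⟩ := he
      have hm2 : k = 2*m := by omega
      subst hm2
      have hm1 : 1 ≤ (m:ℝ) := by
        have : 1 ≤ m := by omega
        exact_mod_cast this
      rw [if_pos (by exact ⟨m, by ring⟩)]
      set t : ℂ := (((2*m:ℕ) : ℂ) - 1 / 3) * (π : ℂ) + Complex.I * (L : ℂ) with htdef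
      have htre : t.re = (2*(m:ℝ) - 1/3)*π := by
        rw [htdef]; simp [Complex.add_re, Complex.mul_re, Complex.sub_re]
        all_goals (push_cast; ring)
      have htim : t.im = L := by
        rw [htdef]; simp [Complex.add_im, Complex.mul_im, Complex.sub_im]
        all_goals (push_cast; ring)
      -- hct
      have hct : ω * Complex.exp (-(Complex.I*t)) = (β:ℂ) := by
        have hsplit : -(Complex.I * t) = ((L:ℝ):ℂ) + ((π/3:ℝ):ℂ)*Complex.I
            + (((-(m:ℤ)) : ℤ):ℂ)*(2*(π:ℂ)*Complex.I) := by
          rw [htdef]; push_cast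
          linear_combination (-((Real.log (-β) : ℝ)):ℂ) * Complex.I_sq
        rw [hsplit, Complex.exp_add, Complex.exp_add, Complex.exp_int_mul_two_pi_mul_I, mul_one]
        have hLexp : Complex.exp ((L:ℝ):ℂ) = ((-β : ℝ):ℂ) := by
          rw [← Complex.ofReal_exp, hLdef, Real.exp_log hb0]
        have hu : ω * Complex.exp (((π/3:ℝ):ℂ) * Complex.I) = -1 := by
          rw [hω', ← Complex.exp_add]
          rw [show ((2*π/3:ℝ):ℂ)*Complex.I + ((π/3:ℝ):ℂ)*Complex.I = (π:ℂ)*Complex.I by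
            push_cast; ring]
          exact Complex.exp_pi_mul_I
        rw [hLexp]
        have hcast : ((-β : ℝ):ℂ) = -(β:ℂ) := by push_cast; ring
        rw [hcast]
        linear_combination (-(β:ℂ)) * hu
      -- re bounds
      have e1 : ((-(Complex.I*ω^2))*t).re = (ω^2).im * t.re + (ω^2).re * t.im := by
        simp [Complex.mul_re, Complex.mul_im, Complex.I_re, Complex.I_im]
        all_goals ring
      have e2 : ((Complex.I*(ω-1))*t).re = -((ω-1).im) * t.re - (ω-1).re * t.im := by
        simp [Complex.mul_re, Complex.mul_im, Complex.I_re, Complex.I_im]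
        all_goals ring
      have e3 : ((2*Complex.I*ω)*t).re = -(2*ω.im) * t.re - 2*ω.re * t.im := by
        simp [Complex.mul_re, Complex.mul_im, Complex.I_re, Complex.I_im]
        all_goals ring
      have e4 : ((Complex.I*(ω-ω^2))*t).re = -((ω-ω^2).im) * t.re - (ω-ω^2).re * t.im := by
        simp [Complex.mul_re, Complex.mul_im, Complex.I_re, Complex.I_im]
        all_goals ring
      have hE : -(Real.sqrt 3*((2*m:ℕ):ℝ)*π/2 - B₀)
          = -(Real.sqrt 3*(2*(m:ℝ))*π/2 - B₀) := by push_cast; ring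
      obtain ⟨ρ, hρn, hρz⟩ := branch β hβ ω t hωabs hμ1 hct
        (Real.sqrt 3*((2*m:ℕ):ℝ)*π/2 - B₀)
        (by rw [e1, htre, htim, hω2re, hω2im, hE, hB0def]; nlinarith [mul_pos hs0 hπ, hL, hm1, mul_le_mul_of_nonneg_left hm1 (le_of_lt (mul_pos hs0 hπ))])
        (by rw [e2, htre, htim, Complex.sub_im, Complex.sub_re, hωre, hωim, hE, hB0def]
            simp only [Complex.one_re, Complex.one_im]
            nlinarith [mul_pos hs0 hπ, hL, hm1, mul_le_mul_of_nonneg_left hm1 (le_of_lt (mul_pos hs0 hπ))])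
        (by rw [e3, htre, htim, hωre, hωim, hE, hB0def]; nlinarith [mul_pos hs0 hπ, hL, hm1, mul_le_mul_of_nonneg_left hm1 (le_of_lt (mul_pos hs0 hπ))])
        (by rw [e4, htre, htim, Complex.sub_im, Complex.sub_re, hωre, hωim, hω2re, hω2im,
              hE, hB0def]
            nlinarith [mul_pos hs0 hπ, hL, hm1, mul_le_mul_of_nonneg_left hm1 (le_of_lt (mul_pos hs0 hπ))])
        hsmall
      refine ⟨ρ, ?_, ?_⟩
      · rw [hΔ]
        have hbr : (∑ r ∈ Finset.range 3, ω ^ r * Complex.exp (Complex.I * ω ^ r * ρ))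
            - (β:ℂ) * ∑ r ∈ Finset.range 3, ω ^ r * Complex.exp (-Complex.I * ω ^ r * ρ) = 0 := by
          rw [Finset.sum_range_succ, Finset.sum_range_succ, Finset.sum_range_one,
            Finset.sum_range_succ, Finset.sum_range_succ, Finset.sum_range_one]
          simp only [pow_zero, pow_one, one_mul, mul_one, neg_mul]
          linear_combination hρz
        rw [hbr, mul_zero]
      · calc ‖ρ - t‖ ≤ 16 * Real.exp 1 / (-β) * Real.exp (-(Real.sqrt 3*((2*m:ℕ):ℝ)*π/2 - B₀)) := hρn
          _ = C * Real.exp (-(Real.sqrt 3) * ((2*m:ℕ):ℝ) * π / 2) := by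
              rw [hexpE, hCdef]; ring
    · -- odd case
      obtain ⟨m, hm⟩ := ho
      subst hm
      have hm0 : 0 ≤ (m:ℝ) := by positivity
      rw [if_neg (by simp [Nat.even_iff, Nat.add_mod, Nat.mul_mod])]
      set t : ℂ := (-(((2*m+1:ℕ)) : ℂ) - 2 / 3) * (π : ℂ) + Complex.I * (L : ℂ) with htdef
      have htre : t.re = (-(2*(m:ℝ)+1) - 2/3)*π := by
        rw [htdef]; simp [Complex.add_re, Complex.mul_re, Complex.sub_re]
        all_goals (push_cast; ring)
      have htim : t.im = L := by
        rw [htdef]; simp [Complex.add_im, Complex.mul_im, Complex.sub_im]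
        all_goals (push_cast; ring)
      have hct : ω^2 * Complex.exp (-(Complex.I*t)) = (β:ℂ) := by
        have hsplit : -(Complex.I * t) = ((L:ℝ):ℂ) + ((2*π/3:ℝ):ℂ)*Complex.I + (π:ℂ)*Complex.I
            + (((m:ℤ) : ℤ):ℂ)*(2*(π:ℂ)*Complex.I) := by
          rw [htdef]; push_cast
          linear_combination (-((Real.log (-β) : ℝ)):ℂ) * Complex.I_sq
        rw [hsplit, Complex.exp_add, Complex.exp_add, Complex.exp_add,
          Complex.exp_int_mul_two_pi_mul_I, mul_one, Complex.exp_pi_mul_I]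
        have hLexp : Complex.exp ((L:ℝ):ℂ) = ((-β : ℝ):ℂ) := by
          rw [← Complex.ofReal_exp, hLdef, Real.exp_log hb0]
        rw [hLexp, ← hω']
        have hcast : ((-β : ℝ):ℂ) = -(β:ℂ) := by push_cast; ring
        rw [hcast]
        linear_combination (β:ℂ) * hω3
      have e1 : ((-(Complex.I*(ω^2)^2))*t).re = ((ω^2)^2).im * t.re + ((ω^2)^2).re * t.im := by
        simp [Complex.mul_re, Complex.mul_im, Complex.I_re, Complex.I_im]
        all_goals ring
      have e2 : ((Complex.I*(ω^2-1))*t).re = -((ω^2-1).im) * t.re - (ω^2-1).re * t.im := by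
        simp [Complex.mul_re, Complex.mul_im, Complex.I_re, Complex.I_im]
        all_goals ring
      have e3 : ((2*Complex.I*ω^2)*t).re = -(2*(ω^2).im) * t.re - 2*(ω^2).re * t.im := by
        simp [Complex.mul_re, Complex.mul_im, Complex.I_re, Complex.I_im]
        all_goals ring
      have e4 : ((Complex.I*(ω^2-(ω^2)^2))*t).re
          = -((ω^2-(ω^2)^2).im) * t.re - (ω^2-(ω^2)^2).re * t.im := by
        simp [Complex.mul_re, Complex.mul_im, Complex.I_re, Complex.I_im]
        all_goals ring
      have hE : -(Real.sqrt 3*((2*m+1:ℕ):ℝ)*π/2 - B₀)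
          = -(Real.sqrt 3*(2*(m:ℝ)+1)*π/2 - B₀) := by push_cast; ring
      have h42im : ((ω^2)^2).im = Real.sqrt 3/2 := by rw [h42, hωim]
      have h42re : ((ω^2)^2).re = -(1/2) := by rw [h42, hωre]
      obtain ⟨ρ, hρn, hρz⟩ := branch β hβ (ω^2) t hω2abs hμ1' hct
        (Real.sqrt 3*((2*m+1:ℕ):ℝ)*π/2 - B₀)
        (by rw [e1, htre, htim, h42re, h42im, hE, hB0def]; nlinarith [mul_pos hs0 hπ, hL, hm0, mul_nonneg (mul_nonneg hs0.le hm0) hπ.le])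
        (by rw [e2, htre, htim, Complex.sub_im, Complex.sub_re, hω2re, hω2im, hE, hB0def]
            simp only [Complex.one_re, Complex.one_im]
            nlinarith [mul_pos hs0 hπ, hL, hm0, mul_nonneg (mul_nonneg hs0.le hm0) hπ.le])
        (by rw [e3, htre, htim, hω2re, hω2im, hE, hB0def]; nlinarith [mul_pos hs0 hπ, hL, hm0, mul_nonneg (mul_nonneg hs0.le hm0) hπ.le])
        (by rw [e4, htre, htim, Complex.sub_im, Complex.sub_re, hω2re, hω2im, h42re, h42im,
              hE, hB0def]
            nlinarith [mul_pos hs0 hπ, hL, hm0, mul_nonneg (mul_nonneg hs0.le hm0) hπ.le])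
        hsmall
      rw [h42] at hρz
      refine ⟨ρ, ?_, ?_⟩
      · rw [hΔ]
        have hbr : (∑ r ∈ Finset.range 3, ω ^ r * Complex.exp (Complex.I * ω ^ r * ρ))
            - (β:ℂ) * ∑ r ∈ Finset.range 3, ω ^ r * Complex.exp (-Complex.I * ω ^ r * ρ) = 0 := by
          rw [Finset.sum_range_succ, Finset.sum_range_succ, Finset.sum_range_one,
            Finset.sum_range_succ, Finset.sum_range_succ, Finset.sum_range_one]
          simp only [pow_zero, pow_one, one_mul, mul_one, neg_mul]
          linear_combination hρz
        rw [hbr, mul_zero]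
      · calc ‖ρ - t‖ ≤ 16 * Real.exp 1 / (-β) * Real.exp (-(Real.sqrt 3*((2*m+1:ℕ):ℝ)*π/2 - B₀)) := hρn
          _ = C * Real.exp (-(Real.sqrt 3) * ((2*m+1:ℕ):ℝ) * π / 2) := by
              rw [hexpE, hCdef]; ring
  -- construct σ by choice
  set P : ℕ → Prop := fun k => ∃ ρ : ℂ, Δ ρ = 0 ∧
      ‖ρ - ((if Even k then ((k : ℂ) - 1 / 3) * (π : ℂ) else (-(k : ℂ) - 2 / 3) * (π : ℂ))
            + Complex.I * (L : ℂ))‖ ≤ C * Real.exp (-(Real.sqrt 3) * (k : ℝ) * π / 2) with hPdef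
  have hPmain : ∀ᶠ k : ℕ in atTop, P k := hmain
  refine ⟨fun k => if h : P k then h.choose else 0, ?_, ?_⟩
  · intro k
    by_cases h : P k
    · simp only [dif_pos h]; exact h.choose_spec.1
    · simp only [dif_neg h]; rw [hΔ]; simp
  · rw [isBigO_iff]
    refine ⟨C, ?_⟩
    filter_upwards [hPmain] with k hk
    simp only [dif_pos hk]
    have := hk.choose_spec.2
    calc ‖hk.choose - _‖ ≤ C * Real.exp (-(Real.sqrt 3) * (k : ℝ) * π / 2) := this
      _ ≤ C * ‖Real.exp (-(Real.sqrt 3) * (k : ℝ) * π / 2)‖ := by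
          rw [Real.norm_eq_abs, abs_of_pos (Real.exp_pos _)]
end

section
/- Let ω = e^{2πi/3}. Every zero of g(ρ) = e^{-iρ} + e^{-iωρ} + e^{-iω²ρ} - 3 on the negative imaginary axis satisfies: the sequence σ_k of such zeros (Re σ_k = 0, Im σ_k < 0) obeys iσ_k = (2π/√3)(k - 1/2) + O(e^{-kπ√3/3}) as k → ∞. -/
open Filter Asymptotics
open scoped Real

noncomputable section Stmt8Aux
namespace Stmt8Aux

def FF (t : ℝ) : ℝ := Real.exp (-t) + 2 * Real.exp (t/2) * Real.cos (Real.sqrt 3 * t/2) - 3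
def FF1 (t : ℝ) : ℝ := -Real.exp (-t) + Real.exp (t/2) * Real.cos (Real.sqrt 3*t/2)
  - Real.sqrt 3 * Real.exp (t/2) * Real.sin (Real.sqrt 3*t/2)
def FF2 (t : ℝ) : ℝ := Real.exp (-t) - Real.exp (t/2) * Real.cos (Real.sqrt 3*t/2)
  - Real.sqrt 3 * Real.exp (t/2) * Real.sin (Real.sqrt 3*t/2)
def FF3 (t : ℝ) : ℝ := -Real.exp (-t) - 2 * Real.exp (t/2) * Real.cos (Real.sqrt 3*t/2)
def aa (k : ℕ) : ℝ := 2 * π / Real.sqrt 3 * ((k : ℝ) - 1/2)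
def dd : ℝ := π / (2 * Real.sqrt 3)
def ee (k : ℕ) : ℝ := 6 * Real.exp (-(aa k / 2))

/-! ### Numeric bounds -/

lemma s3_lb : 1.73205 < Real.sqrt 3 := by
  rw [show (1.73205:ℝ) = Real.sqrt (1.73205^2) by rw [Real.sqrt_sq]; norm_num]
  exact Real.sqrt_lt_sqrt (by positivity) (by norm_num)
lemma s3_ub : Real.sqrt 3 < 1.73206 := by
  rw [show (1.73206:ℝ) = Real.sqrt (1.73206^2) by rw [Real.sqrt_sq]; norm_num]
  exact Real.sqrt_lt_sqrt (by norm_num) (by norm_num)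
lemma s3_sq : Real.sqrt 3 * Real.sqrt 3 = 3 := Real.mul_self_sqrt (by norm_num)
lemma s3_pos : 0 < Real.sqrt 3 := Real.sqrt_pos.mpr (by norm_num)
lemma dd_lb : 0.90689 < dd := by
  have h1 := Real.pi_gt_d6; have h2 := s3_ub
  rw [dd, lt_div_iff₀ (by positivity)]; nlinarith
lemma dd_ub : dd < 0.90691 := by
  have h1 := Real.pi_lt_d6; have h2 := s3_lb
  rw [dd, div_lt_iff₀ (by positivity)]; nlinarith
lemma aa_eq (k : ℕ) : aa k = (2 * (k:ℝ) - 1) * (2 * dd) := by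
  rw [aa, dd]; field_simp
lemma aa_sub_dd (k : ℕ) : aa k - dd = (4 * (k:ℝ) - 3) * dd := by
  rw [aa, dd]; field_simp; ring
lemma aa2_lb (k : ℕ) (hk : 2 ≤ k) : 5.44 ≤ aa k := by
  have hk' : (2:ℝ) ≤ (k:ℝ) := by exact_mod_cast hk
  have h := dd_lb
  have h2 : aa k = (4*(k:ℝ) - 2) * dd := by rw [aa, dd]; field_simp; ring
  rw [h2]; nlinarith
lemma exp272 : (11:ℝ) ≤ Real.exp 2.72 := by
  have h := Real.exp_one_gt_d9
  have h2 : Real.exp 2.72 = Real.exp 1 * Real.exp 1 * Real.exp 0.72 := by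
    rw [← Real.exp_add, ← Real.exp_add]; norm_num
  have h3 : (1.72:ℝ) ≤ Real.exp 0.72 := by
    have := Real.add_one_le_exp (0.72:ℝ); linarith
  nlinarith [Real.exp_pos (0.72:ℝ)]
lemma pm (k : ℕ) : ((-1:ℝ))^k = 1 ∨ ((-1:ℝ))^k = -1 := by
  rcases Nat.even_or_odd k with h | h
  · left; exact h.neg_one_pow
  · right; exact h.neg_one_pow
lemma pm_sq (k : ℕ) : ((-1:ℝ))^k * ((-1:ℝ))^k = 1 := by
  rcases pm k with h | h <;> rw [h] <;> norm_num
lemma exp_neg_le {t : ℝ} (h : 0 < t) : Real.exp (-t) ≤ 1/(1+t) := by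
  rw [Real.exp_neg, inv_eq_one_div]
  apply div_le_div_of_nonneg_left (by norm_num) (by linarith)
    (Real.add_one_le_exp t |>.trans_eq' (by ring))

/-! ### Derivatives -/

lemma he1 (t : ℝ) : HasDerivAt (fun t : ℝ => Real.exp (-t)) (-Real.exp (-t)) t := by
  simpa using ((hasDerivAt_id t).neg).exp
lemma he2 (t : ℝ) : HasDerivAt (fun t : ℝ => Real.exp (t/2)) (Real.exp (t/2) * (1/2)) t := by
  simpa using ((hasDerivAt_id t).div_const 2).exp
lemma hcos (t : ℝ) : HasDerivAt (fun t : ℝ => Real.cos (Real.sqrt 3*t/2))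
    (-Real.sin (Real.sqrt 3*t/2) * (Real.sqrt 3/2)) t := by
  simpa using (((hasDerivAt_id t).const_mul (Real.sqrt 3)).div_const 2).cos
lemma hsin (t : ℝ) : HasDerivAt (fun t : ℝ => Real.sin (Real.sqrt 3*t/2))
    (Real.cos (Real.sqrt 3*t/2) * (Real.sqrt 3/2)) t := by
  simpa using (((hasDerivAt_id t).const_mul (Real.sqrt 3)).div_const 2).sin

lemma dFF (t : ℝ) : HasDerivAt FF (FF1 t) t := by
  have h := ((he1 t).add (((he2 t).const_mul 2).mul (hcos t))).sub_const 3
  unfold FF FF1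
  exact h.congr_deriv (by ring)

lemma dFF1 (t : ℝ) : HasDerivAt FF1 (FF2 t) t := by
  have h := (((he1 t).neg).add ((he2 t).mul (hcos t))).sub
    (((he2 t).const_mul (Real.sqrt 3)).mul (hsin t))
  unfold FF1 FF2
  exact h.congr_deriv (by linear_combination (-Real.exp (t/2) * Real.cos (Real.sqrt 3 * t / 2) / 2) * s3_sq)

lemma dFF2 (t : ℝ) : HasDerivAt FF2 (FF3 t) t := by
  have h := (((he1 t)).sub ((he2 t).mul (hcos t))).sub
    (((he2 t).const_mul (Real.sqrt 3)).mul (hsin t))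
  unfold FF2 FF3
  exact h.congr_deriv (by linear_combination (-Real.exp (t/2) * Real.cos (Real.sqrt 3 * t / 2) / 2) * s3_sq)

/-! ### Trigonometric shifts -/

lemma u_shift (k : ℕ) (s : ℝ) :
    Real.sqrt 3 * (aa k + s) / 2 = (k:ℝ) * π - (π/2 - Real.sqrt 3 * s / 2) := by
  have key : 2 * π / Real.sqrt 3 * Real.sqrt 3 = 2 * π := div_mul_cancel₀ _ s3_pos.ne'
  rw [aa]; linear_combination (((k:ℝ) - 1/2) / 2) * key
lemma cos_shift (k : ℕ) (s : ℝ) :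
    Real.cos (Real.sqrt 3 * (aa k + s) / 2) = (-1:ℝ)^k * Real.sin (Real.sqrt 3 * s / 2) := by
  rw [u_shift]
  rw [show ((k:ℝ) * π) = ((k:ℤ):ℝ) * π by push_cast; ring]
  rw [Real.cos_int_mul_pi_sub, Real.cos_pi_div_two_sub]
  rw [zpow_natCast]
lemma sin_shift (k : ℕ) (s : ℝ) :
    Real.sin (Real.sqrt 3 * (aa k + s) / 2) = -((-1:ℝ)^k * Real.cos (Real.sqrt 3 * s / 2)) := by
  rw [u_shift]
  rw [show ((k:ℝ) * π) = ((k:ℤ):ℝ) * π by push_cast; ring]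
  rw [Real.sin_int_mul_pi_sub, Real.sin_pi_div_two_sub]
  rw [zpow_natCast]

/-! ### No zeros in (0, dd] -/

lemma dd_pos : 0 < dd := by unfold dd; positivity
lemma u_dd : Real.sqrt 3 * dd / 2 = π / 4 := by
  unfold dd
  rw [div_eq_div_iff (by norm_num) (by norm_num)]
  field_simp
  ring
lemma u_mem {t : ℝ} (h0 : 0 ≤ t) (h1 : t ≤ dd) :
    Real.sqrt 3 * t / 2 ∈ Set.Icc 0 (π/4) := by
  constructor
  · positivity
  · rw [← u_dd]; gcongr

lemma FF3_neg {t : ℝ} (h0 : 0 ≤ t) (h1 : t ≤ dd) : FF3 t < 0 := by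
  obtain ⟨hu0, hu1⟩ := u_mem h0 h1
  have hcos : 0 < Real.cos (Real.sqrt 3 * t / 2) := by
    apply Real.cos_pos_of_mem_Ioo
    constructor <;> nlinarith [Real.pi_pos]
  unfold FF3
  nlinarith [Real.exp_pos (-t), Real.exp_pos (t/2)]

lemma FF2_neg {t : ℝ} (h0 : 0 < t) (h1 : t ≤ dd) : FF2 t < 0 := by
  have anti : StrictAntiOn FF2 (Set.Icc 0 dd) := by
    apply strictAntiOn_of_deriv_neg (convex_Icc _ _)
    · exact fun x hx => (dFF2 x).differentiableAt.continuousAt.continuousWithinAt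
    · intro x hx
      rw [interior_Icc] at hx
      rw [(dFF2 x).deriv]
      exact FF3_neg hx.1.le hx.2.le
  have h := anti (Set.mem_Icc.mpr ⟨le_refl 0, dd_pos.le⟩) (Set.mem_Icc.mpr ⟨h0.le, h1⟩) h0
  have h2 : FF2 0 = 0 := by unfold FF2; norm_num
  linarith

lemma FF1_neg {t : ℝ} (h0 : 0 < t) (h1 : t ≤ dd) : FF1 t < 0 := by
  have anti : StrictAntiOn FF1 (Set.Icc 0 dd) := by
    apply strictAntiOn_of_deriv_neg (convex_Icc _ _)
    · exact fun x hx => (dFF1 x).differentiableAt.continuousAt.continuousWithinAt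
    · intro x hx
      rw [interior_Icc] at hx
      rw [(dFF1 x).deriv]
      exact FF2_neg hx.1 hx.2.le
  have h := anti (Set.mem_Icc.mpr ⟨le_refl 0, dd_pos.le⟩) (Set.mem_Icc.mpr ⟨h0.le, h1⟩) h0
  have h2 : FF1 0 = 0 := by unfold FF1; norm_num
  linarith

lemma FF_neg_small {t : ℝ} (h0 : 0 < t) (h1 : t ≤ dd) : FF t < 0 := by
  have anti : StrictAntiOn FF (Set.Icc 0 dd) := by
    apply strictAntiOn_of_deriv_neg (convex_Icc _ _)
    · exact fun x hx => (dFF x).differentiableAt.continuousAt.continuousWithinAt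
    · intro x hx
      rw [interior_Icc] at hx
      rw [(dFF x).deriv]
      exact FF1_neg hx.1 hx.2.le
  have h := anti (Set.mem_Icc.mpr ⟨le_refl 0, dd_pos.le⟩) (Set.mem_Icc.mpr ⟨h0.le, h1⟩) h0
  have h2 : FF 0 = 0 := by unfold FF; norm_num
  linarith

/-! ### Strict monotonicity on the intervals around aa k -/

set_option maxHeartbeats 1600000 in
lemma FF1_pos (k : ℕ) (hk : 1 ≤ k) {x : ℝ} (hx1 : aa k - dd < x) (hx2 : x < aa k + dd) :
    0 < (-1:ℝ)^k * FF1 x := by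
  obtain ⟨s, hs⟩ : ∃ s, x = aa k + s := ⟨x - aa k, by ring⟩
  obtain ⟨v, hv⟩ : ∃ v, v = Real.sqrt 3 * s / 2 := ⟨_, rfl⟩
  obtain ⟨e, he⟩ : ∃ e : ℝ, e = (-1:ℝ)^k := ⟨_, rfl⟩
  have hsq : e * e = 1 := by rw [he]; exact pm_sq k
  have hepm : e = 1 ∨ e = -1 := by rw [he]; exact pm k
  have hxd : dd < x := by
    have h1 := aa_sub_dd k
    have hk' : (1:ℝ) ≤ (k:ℝ) := by exact_mod_cast hk
    nlinarith [dd_lb]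
  have key : (-1:ℝ)^k * FF1 x = -(e * Real.exp (-x))
      + Real.exp (x/2) * (Real.sin v + Real.sqrt 3 * Real.cos v) := by
    rw [hs]
    unfold FF1
    rw [cos_shift k s, sin_shift k s, ← he, hv]
    linear_combination (Real.exp ((aa k + s)/2) * Real.sin (Real.sqrt 3 * s/2)
      + Real.sqrt 3 * Real.exp ((aa k + s)/2) * Real.cos (Real.sqrt 3 * s/2)) * hsq
  rw [key]
  have hsd : |s| < dd := by
    rw [abs_lt]; constructor <;> [nlinarith [hx1]; nlinarith [hx2]]
  have hvpi : |v| < π / 4 := by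
    rw [← u_dd, hv, abs_div, abs_mul, abs_of_nonneg s3_pos.le,
      abs_of_nonneg (by norm_num : (0:ℝ) ≤ (2:ℝ))]
    have := abs_nonneg s
    have h2 : Real.sqrt 3 * |s| < Real.sqrt 3 * dd :=
      mul_lt_mul_of_pos_left hsd s3_pos
    linarith
  have hvb : |v| < 0.78540 := by
    have := Real.pi_lt_d6
    linarith [hvpi]
  rw [abs_lt] at hvb
  have hsinv : -0.7854 ≤ Real.sin v := by
    rcases le_or_gt 0 v with h | h
    · have := Real.sin_nonneg_of_nonneg_of_le_pi h (by nlinarith [Real.pi_gt_three])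
      linarith
    · have h1 : Real.sin (-v) ≤ -v := Real.sin_le (by linarith)
      rw [Real.sin_neg] at h1; linarith
  have hcosv : 1 - v^2/2 ≤ Real.cos v := Real.one_sub_sq_div_two_le_cos
  have hv2 : v^2 ≤ 0.6169 := by nlinarith [hvb.1, hvb.2]
  have hcv : (0.6915:ℝ) ≤ Real.cos v := by nlinarith
  have hsum : (0.412:ℝ) ≤ Real.sin v + Real.sqrt 3 * Real.cos v := by
    nlinarith [s3_lb, mul_le_mul_of_nonneg_right hcv (le_of_lt s3_pos)]
  have hexp : (1.4534:ℝ) ≤ Real.exp (x/2) := by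
    have := Real.add_one_le_exp (x/2)
    nlinarith [dd_lb]
  have hmain : (1.4534:ℝ) * 0.412 ≤ Real.exp (x/2) * (Real.sin v + Real.sqrt 3 * Real.cos v) :=
    mul_le_mul hexp hsum (by norm_num) (Real.exp_pos _).le
  have hen : Real.exp (-x) < 0.525 := by
    have h1 := exp_neg_le (by linarith [dd_lb] : (0:ℝ) < x)
    have h2 : 1/(1+x) < 0.525 := by
      rw [div_lt_iff₀ (by nlinarith [dd_lb])]
      nlinarith [dd_lb]
    linarith
  have hpk : e * Real.exp (-x) ≤ Real.exp (-x) := by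
    rcases hepm with h | h <;> rw [h] <;> nlinarith [Real.exp_pos (-x)]
  linarith

lemma mono (k : ℕ) (hk : 1 ≤ k) :
    StrictMonoOn (fun t => (-1:ℝ)^k * FF t) (Set.Icc (aa k - dd) (aa k + dd)) := by
  apply strictMonoOn_of_deriv_pos (convex_Icc _ _)
  · exact fun x hx =>
      (((dFF x).const_mul ((-1:ℝ)^k)).differentiableAt.continuousAt).continuousWithinAt
  · intro x hx
    rw [interior_Icc] at hx
    rw [((dFF x).const_mul ((-1:ℝ)^k)).deriv]
    exact FF1_pos k hk hx.1 hx.2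

/-! ### Existence of zeros near aa k -/

lemma FF_cont : Continuous FF := by unfold FF; fun_prop

lemma phi_eq (k : ℕ) (s : ℝ) : (-1:ℝ)^k * FF (aa k + s) =
    (-1:ℝ)^k * (Real.exp (-(aa k + s)) - 3)
      + 2 * Real.exp ((aa k + s)/2) * Real.sin (Real.sqrt 3 * s / 2) := by
  unfold FF
  rw [cos_shift k s]
  linear_combination (2 * Real.exp ((aa k + s)/2) * Real.sin (Real.sqrt 3 * s / 2)) * pm_sq k

set_option maxHeartbeats 1600000 in
lemma exists_zero (k : ℕ) (hk : 2 ≤ k) :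
    ∃ t ∈ Set.Icc (aa k - ee k) (aa k + ee k), FF t = 0 := by
  obtain ⟨A, hA⟩ : ∃ A, A = Real.exp (aa k / 2) := ⟨_, rfl⟩
  have hA11 : (11:ℝ) ≤ A := by
    rw [hA]
    refine le_trans exp272 (Real.exp_le_exp.mpr ?_)
    linarith [aa2_lb k hk]
  have hApos : (0:ℝ) < A := by linarith
  have heeA : ee k * A = 6 := by
    rw [ee, hA, mul_assoc, ← Real.exp_add]
    norm_num
  have hee_pos : 0 < ee k := by rw [ee]; positivity
  have hee_ub : ee k ≤ 0.546 := by
    nlinarith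
  obtain ⟨x, hx⟩ : ∃ x, x = Real.sqrt 3 * ee k / 2 := ⟨_, rfl⟩
  have hx_pos : 0 < x := by rw [hx]; positivity
  have hx_ub : x ≤ 0.473 := by rw [hx]; nlinarith [s3_ub]
  have hAx : A * x = 3 * Real.sqrt 3 := by
    rw [hx]
    have : A * (Real.sqrt 3 * ee k / 2) = (ee k * A) * Real.sqrt 3 / 2 := by ring
    rw [this, heeA]; ring
  have hsinx : x - x^3/4 < Real.sin x := by
    have := Real.sin_gt_sub_cube hx_pos; nlinarith [pow_pos hx_pos 3]
  have hplus : 0 < (-1:ℝ)^k * FF (aa k + ee k) := by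
    rw [phi_eq]
    have h1 : (-1:ℝ)^k * (Real.exp (-(aa k + ee k)) - 3) ≥ -3 := by
      rcases pm k with h | h <;> rw [h] <;>
        nlinarith [Real.exp_pos (-(aa k + ee k)),
          Real.exp_le_one_iff.mpr (by nlinarith [aa2_lb k hk] : -(aa k + ee k) ≤ 0)]
    have h2 : Real.exp ((aa k + ee k)/2) ≥ A := by
      rw [hA]
      apply Real.exp_le_exp.mpr
      linarith
    have hxe : Real.sqrt 3 * ee k / 2 = x := hx.symm
    rw [hxe]
    have hs_pos : 0 < x - x^3/4 := by
      nlinarith [mul_nonneg (mul_nonneg (sub_nonneg.mpr hx_ub)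
        (by positivity : (0:ℝ) ≤ 0.473 + x)) hx_pos.le]
    have h3 : 2 * A * (x - x^3/4) ≤ 2 * Real.exp ((aa k + ee k)/2) * Real.sin x :=
      mul_le_mul (by linarith) hsinx.le hs_pos.le (by positivity)
    have h4 : 2 * A * (x - x^3/4) ≥ 9 := by
      have : 2 * A * (x - x^3/4) = 2 * (A*x) - (A*x) * x^2 / 2 := by ring
      rw [this, hAx]
      nlinarith [s3_lb, s3_ub, sq_nonneg x]
    linarith
  have hminus : (-1:ℝ)^k * FF (aa k - ee k) < 0 := by
    have heq : aa k - ee k = aa k + (-ee k) := by ring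
    rw [heq, phi_eq]
    have h1 : (-1:ℝ)^k * (Real.exp (-(aa k + -ee k)) - 3) ≤ 3 := by
      rcases pm k with h | h <;> rw [h] <;>
        nlinarith [Real.exp_pos (-(aa k + -ee k)),
          Real.exp_le_one_iff.mpr (by nlinarith [aa2_lb k hk] : -(aa k + -ee k) ≤ 0)]
    have hxe : Real.sqrt 3 * (-ee k) / 2 = -x := by rw [hx]; ring
    rw [hxe, Real.sin_neg]
    have h2 : Real.exp ((aa k + -ee k)/2) ≥ 0.727 * A := by
      have : Real.exp ((aa k + -ee k)/2) = A * Real.exp (-(ee k)/2) := by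
        rw [hA, ← Real.exp_add]; ring_nf
      rw [this]
      have h5 : Real.exp (-(ee k)/2) ≥ 1 - ee k/2 := by
        have := Real.add_one_le_exp (-(ee k)/2); linarith
      nlinarith
    have hs_pos : 0 < x - x^3/4 := by
      nlinarith [mul_nonneg (mul_nonneg (sub_nonneg.mpr hx_ub)
        (by positivity : (0:ℝ) ≤ 0.473 + x)) hx_pos.le]
    have h3 : 2 * (0.727 * A) * (x - x^3/4) ≤ 2 * Real.exp ((aa k + -ee k)/2) * Real.sin x :=
      mul_le_mul (by linarith) hsinx.le hs_pos.le (by positivity)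
    have h4 : 2 * (0.727 * A) * (x - x^3/4) ≥ 6 := by
      have : 2 * (0.727 * A) * (x - x^3/4) = 0.727 * (2 * (A*x) - (A*x) * x^2 / 2) := by ring
      rw [this, hAx]
      nlinarith [s3_lb, s3_ub, sq_nonneg x]
    linarith
  have hcont : ContinuousOn (fun s => (-1:ℝ)^k * FF (aa k + s)) (Set.Icc (-(ee k)) (ee k)) :=
    (continuous_const.mul (FF_cont.comp (continuous_const.add continuous_id))).continuousOn
  have hsub := intermediate_value_Icc (by linarith : -(ee k) ≤ ee k) hcont
  have hmem : (0:ℝ) ∈ Set.Icc ((-1:ℝ)^k * FF (aa k + -ee k)) ((-1:ℝ)^k * FF (aa k + ee k)) := by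
    constructor
    · have : aa k + -ee k = aa k - ee k := by ring
      rw [this]; linarith
    · linarith
  obtain ⟨s, hs1, hs2⟩ := hsub hmem
  refine ⟨aa k + s, ?_, ?_⟩
  · constructor <;> [linarith [hs1.1]; linarith [hs1.2]]
  · have hpk : ((-1:ℝ)^k) ≠ 0 := by rcases pm k with h | h <;> rw [h] <;> norm_num
    have hs2' : (-1:ℝ)^k * FF (aa k + s) = 0 := hs2
    exact (mul_eq_zero.mp hs2').resolve_left hpk

/-! ### Localization of all zeros -/

lemma two_pi_div : 2 * π / Real.sqrt 3 = 4 * dd := by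
  unfold dd; field_simp; ring

lemma gap (m : ℤ) (hm : 1 ≤ m) (t : ℝ) (ht : |t - (m:ℝ) * (4 * dd)| ≤ dd) : FF t ≠ 0 := by
  obtain ⟨w, hw⟩ : ∃ w, w = Real.sqrt 3 * t / 2 - (m:ℝ) * π := ⟨_, rfl⟩
  have hcos : Real.cos (Real.sqrt 3 * t / 2) = (-1:ℝ)^m * Real.cos w := by
    have h1 : Real.sqrt 3 * t / 2 = (m:ℝ) * π - (-w) := by rw [hw]; ring
    rw [h1, Real.cos_int_mul_pi_sub, Real.cos_neg]
  have hw4 : |w| ≤ π/4 := by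
    have h2 : w = Real.sqrt 3 * (t - (m:ℝ) * (4*dd)) / 2 := by
      rw [hw]
      have : (m:ℝ) * π = Real.sqrt 3 * ((m:ℝ) * (4 * dd)) / 2 := by
        linear_combination (-(4*(m:ℝ))) * u_dd
      rw [this]; ring
    rw [h2, ← u_dd, abs_div, abs_mul, abs_of_nonneg s3_pos.le,
      abs_of_nonneg (by norm_num : (0:ℝ) ≤ (2:ℝ))]
    have := mul_le_mul_of_nonneg_left ht s3_pos.le
    linarith
  have hcw : (0.6915:ℝ) ≤ Real.cos w := by
    have h1 : 1 - w^2/2 ≤ Real.cos w := Real.one_sub_sq_div_two_le_cos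
    have h2 : w^2 ≤ (π/4)^2 := by
      nlinarith [sq_abs w, mul_self_le_mul_self (abs_nonneg w) hw4]
    have hpi := Real.pi_lt_d6
    have hpi0 := Real.pi_pos
    nlinarith
  have htl : 2.7 ≤ t := by
    have hm' : (1:ℝ) ≤ (m:ℝ) := by exact_mod_cast hm
    have := abs_le.mp ht
    nlinarith [dd_lb]
  have hexp2 : (2.35:ℝ) ≤ Real.exp (t/2) := by
    have := Real.add_one_le_exp (t/2); linarith
  have hexpneg : Real.exp (-t) ≤ 1 := Real.exp_le_one_iff.mpr (by linarith)
  intro hzero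
  unfold FF at hzero
  rw [hcos] at hzero
  rcases Int.even_or_odd m with he | ho
  · rw [he.neg_one_zpow] at hzero
    nlinarith [Real.exp_pos (-t), mul_le_mul hexp2 hcw (by norm_num) (Real.exp_pos _).le]
  · rw [ho.neg_one_zpow] at hzero
    nlinarith [Real.exp_pos (-t), mul_le_mul hexp2 hcw (by norm_num) (Real.exp_pos _).le]

lemma zero_loc {t : ℝ} (ht : 0 < t) (hz : FF t = 0) : ∃ k : ℕ, 2 ≤ k ∧ |t - aa k| ≤ dd := by
  rcases le_or_gt t dd with hle | hgt
  · exact absurd hz (FF_neg_small ht hle).ne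
  obtain ⟨n, hn⟩ : ∃ n : ℤ, n = round (t / (2 * dd)) := ⟨_, rfl⟩
  have hdd0 : (0:ℝ) < dd := by linarith [dd_lb]
  have hround : |t / (2*dd) - (n:ℝ)| ≤ 1/2 := by rw [hn]; exact abs_sub_round _
  have hdist : |t - (n:ℝ) * (2*dd)| ≤ dd := by
    have h1 : t - (n:ℝ)*(2*dd) = (t/(2*dd) - (n:ℝ)) * (2*dd) := by
      rw [sub_mul, div_mul_cancel₀ _ (by linarith : (0:ℝ) < 2*dd).ne']
    rw [h1, abs_mul, abs_of_nonneg (by linarith : (0:ℝ) ≤ 2*dd)]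
    nlinarith [abs_nonneg (t/(2*dd) - (n:ℝ))]
  have habs := abs_le.mp hdist
  have hn1 : 1 ≤ n := by
    by_contra h
    push_neg at h
    have hn0 : n ≤ 0 := by omega
    have : (n:ℝ) ≤ 0 := by exact_mod_cast hn0
    nlinarith
  rcases Int.even_or_odd n with ⟨m, hm⟩ | ⟨m, hm⟩
  · exfalso
    have hm1 : 1 ≤ m := by omega
    apply gap m hm1 t ?_ hz
    have : (n:ℝ) * (2*dd) = (m:ℝ) * (4*dd) := by
      have : (n:ℝ) = (m:ℝ) + (m:ℝ) := by exact_mod_cast hm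
      rw [this]; ring
    rwa [this] at hdist
  · have hm0 : 0 ≤ m := by omega
    obtain ⟨k, hk⟩ : ∃ k : ℕ, (k:ℤ) = m + 1 := ⟨(m+1).toNat, Int.toNat_of_nonneg (by omega)⟩
    have hk1 : 1 ≤ k := by omega
    have haak : aa k = (n:ℝ) * (2*dd) := by
      rw [aa_eq]
      have h1 : (k:ℝ) = (m:ℝ) + 1 := by exact_mod_cast hk
      have h2 : (n:ℝ) = 2*(m:ℝ) + 1 := by exact_mod_cast hm
      rw [h1, h2]; ring
    have hdist' : |t - aa k| ≤ dd := by rw [haak]; exact hdist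
    refine ⟨k, ?_, hdist'⟩
    rcases Nat.lt_or_ge k 2 with hk2 | hk2
    · exfalso
      have hkeq : k = 1 := by omega
      rw [hkeq] at hdist'
      have haa1 : aa 1 = 2 * dd := by rw [aa_eq]; norm_num
      have habs' := abs_le.mp hdist'
      have hmem1 : dd ∈ Set.Icc (aa 1 - dd) (aa 1 + dd) := by
        rw [haa1]; constructor <;> [linarith; linarith]
      have hmemt : t ∈ Set.Icc (aa 1 - dd) (aa 1 + dd) := by
        rw [haa1]; constructor <;> [linarith; linarith]
      have := mono 1 (le_refl 1) hmem1 hmemt hgt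
      simp only [pow_one, neg_one_mul] at this
      have hFdd : FF dd < 0 := FF_neg_small hdd0 (le_refl _)
      rw [hz] at this
      linarith
    · exact hk2

/-! ### Bridge to the complex function -/

lemma omega_val : Complex.exp (2 * π * Complex.I / 3)
    = (-(1/2) : ℂ) + ((Real.sqrt 3 / 2 : ℝ) : ℂ) * Complex.I := by
  have h1 : (2 * π * Complex.I / 3 : ℂ) = ((2 * π / 3 : ℝ) : ℂ) * Complex.I := by
    push_cast; ring
  rw [h1, Complex.exp_mul_I, ← Complex.ofReal_cos, ← Complex.ofReal_sin]
  have hc : Real.cos (2 * π / 3) = -(1/2) := by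
    rw [show (2 * π / 3 : ℝ) = π - π/3 by ring, Real.cos_pi_sub, Real.cos_pi_div_three]
  have hs : Real.sin (2 * π / 3) = Real.sqrt 3 / 2 := by
    rw [show (2 * π / 3 : ℝ) = π - π/3 by ring, Real.sin_pi_sub, Real.sin_pi_div_three]
  rw [hc, hs]
  push_cast; ring

lemma bridge (ω : ℂ) (hω : ω = Complex.exp (2 * π * Complex.I / 3))
    (g : ℂ → ℂ)
    (hg : ∀ ρ, g ρ = Complex.exp (-Complex.I * ρ) + Complex.exp (-Complex.I * ω * ρ)
      + Complex.exp (-Complex.I * ω ^ 2 * ρ) - 3) (t : ℝ) :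
    g ((t : ℂ) * (-Complex.I)) = ((FF t : ℝ) : ℂ) := by
  have hω' : ω = (-(1/2) : ℂ) + ((Real.sqrt 3 / 2 : ℝ) : ℂ) * Complex.I := by
    rw [hω, omega_val]
  have hc34 : (((Real.sqrt 3 / 2 : ℝ)) : ℂ)^2 = 3/4 := by
    rw [← Complex.ofReal_pow]
    norm_num [div_pow, Real.sq_sqrt]
  have hω2 : ω^2 = (-(1/2) : ℂ) - ((Real.sqrt 3 / 2 : ℝ) : ℂ) * Complex.I := by
    rw [hω']
    linear_combination (((Real.sqrt 3 / 2 : ℝ)):ℂ)^2 * Complex.I_sq - hc34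
  have hexpI : ∀ y : ℝ, Complex.exp (((y : ℝ) : ℂ) * Complex.I)
      = ((Real.cos y : ℝ) : ℂ) + ((Real.sin y : ℝ) : ℂ) * Complex.I := by
    intro y
    rw [Complex.exp_mul_I, ← Complex.ofReal_cos, ← Complex.ofReal_sin]
  have e1 : -Complex.I * ((t : ℂ) * (-Complex.I)) = ((-t : ℝ) : ℂ) := by
    push_cast; linear_combination (t:ℂ) * Complex.I_sq
  have e2 : -Complex.I * ω * ((t : ℂ) * (-Complex.I))
      = ((t/2 : ℝ) : ℂ) + ((-(Real.sqrt 3 * t / 2) : ℝ) : ℂ) * Complex.I := by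
    rw [hω']; push_cast
    linear_combination ((-(1/2) : ℂ) + ((Real.sqrt 3 : ℝ)/2 : ℂ) * Complex.I) * (t:ℂ) * Complex.I_sq
  have e3 : -Complex.I * ω^2 * ((t : ℂ) * (-Complex.I))
      = ((t/2 : ℝ) : ℂ) + (((Real.sqrt 3 * t / 2) : ℝ) : ℂ) * Complex.I := by
    rw [hω2]; push_cast
    linear_combination ((-(1/2) : ℂ) - ((Real.sqrt 3 : ℝ)/2 : ℂ) * Complex.I) * (t:ℂ) * Complex.I_sq
  rw [hg, e1, e2, e3, Complex.exp_add, Complex.exp_add, hexpI, hexpI,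
    ← Complex.ofReal_exp, ← Complex.ofReal_exp]
  rw [Real.cos_neg, Real.sin_neg]
  unfold FF
  push_cast
  ring

/-! ### Final helper lemmas -/

lemma ee_pos (k : ℕ) : 0 < ee k := by rw [ee]; positivity
lemma ee_ub (k : ℕ) (hk : 2 ≤ k) : ee k ≤ 0.55 := by
  rw [ee]
  have h1 : Real.exp (-(aa k / 2)) ≤ Real.exp (-2.72) :=
    Real.exp_le_exp.mpr (by linarith [aa2_lb k hk])
  have h2 : Real.exp (-2.72) * Real.exp 2.72 = 1 := by rw [← Real.exp_add]; norm_num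
  nlinarith [Real.exp_pos (-2.72), exp272]

lemma exp_arg (k : ℕ) : -(aa k / 2) = -((k:ℝ) * π * Real.sqrt 3 / 3) + dd := by
  have h1 : π * Real.sqrt 3 / 3 = 2 * dd := by
    unfold dd
    have h0 : Real.sqrt 3 ≠ 0 := s3_pos.ne'
    field_simp
    linear_combination s3_sq
  have h2 : (k:ℝ) * π * Real.sqrt 3 / 3 = (k:ℝ) * (π * Real.sqrt 3 / 3) := by ring
  rw [h2, h1, aa_eq]; ring

end Stmt8Aux
end Stmt8Aux

open Stmt8Aux in
theorem stmt8 (ω : ℂ) (hω : ω = Complex.exp (2 * π * Complex.I / 3))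
    (g : ℂ → ℂ)
    (hg : ∀ ρ, g ρ = Complex.exp (-Complex.I * ρ) + Complex.exp (-Complex.I * ω * ρ)
      + Complex.exp (-Complex.I * ω ^ 2 * ρ) - 3) :
    ∃ σ : ℕ → ℂ,
      (∀ k, g (σ k) = 0 ∧ (σ k).re = 0 ∧ (σ k).im < 0) ∧
      (∀ ρ : ℂ, g ρ = 0 → ρ.re = 0 → ρ.im < 0 → ∃ k, ρ = σ k) ∧
      (fun k : ℕ => Complex.I * σ k
          - (((2 * π / Real.sqrt 3) * ((k : ℝ) - 1 / 2) : ℝ) : ℂ))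
        =O[atTop] fun k : ℕ => Real.exp (-(k : ℝ) * π * Real.sqrt 3 / 3) := by
  have hbr := bridge ω hω g hg
  have hts : ∀ k : ℕ, ∃ t, t ∈ Set.Icc (aa (max k 2) - ee (max k 2)) (aa (max k 2) + ee (max k 2))
      ∧ FF t = 0 := fun k => by
    obtain ⟨t, h1, h2⟩ := exists_zero (max k 2) (le_max_right k 2)
    exact ⟨t, h1, h2⟩
  choose tseq htmem htzero using hts
  have htnear : ∀ k : ℕ, 2 ≤ k → |tseq k - aa k| ≤ ee k := by
    intro k hk
    have hmax : max k 2 = k := max_eq_left hk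
    have := htmem k
    rw [hmax] at this
    rw [abs_le]; exact ⟨by linarith [this.1], by linarith [this.2]⟩
  have htpos : ∀ k : ℕ, 0 < tseq k := by
    intro k
    have h2 : 2 ≤ max k 2 := le_max_right k 2
    have := (htmem k).1
    have := aa2_lb (max k 2) h2
    have := ee_ub (max k 2) h2
    linarith
  refine ⟨fun k => (tseq k : ℂ) * (-Complex.I), ?_, ?_, ?_⟩
  · intro k
    refine ⟨?_, by simp, by simpa using htpos k⟩
    rw [hbr (tseq k), htzero k]
    simp
  · intro ρ hρ hre him
    obtain ⟨t, ht, hρt⟩ : ∃ t : ℝ, 0 < t ∧ ρ = (t : ℂ) * (-Complex.I) := by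
      refine ⟨-ρ.im, by linarith, ?_⟩
      apply Complex.ext <;> simp [hre]
    rw [hρt, hbr t] at hρ
    have hFFt : FF t = 0 := by exact_mod_cast hρ
    obtain ⟨k, hk2, hknear⟩ := zero_loc ht hFFt
    have hk1 : 1 ≤ k := by omega
    have habs := abs_le.mp hknear
    have habs2 := abs_le.mp (htnear k hk2)
    have heedd : ee k ≤ dd := by linarith [ee_ub k hk2, dd_lb]
    refine ⟨k, ?_⟩
    rw [hρt]
    have hteq : t = tseq k := by
      have hinj := (mono k hk1).injOn
      apply hinj ?_ ?_ ?_
      · exact Set.mem_Icc.mpr ⟨by linarith, by linarith⟩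
      · exact Set.mem_Icc.mpr ⟨by linarith, by linarith⟩
      · simp only [hFFt, htzero k, mul_zero]
    rw [hteq]
  · rw [isBigO_iff]
    refine ⟨6 * Real.exp dd, ?_⟩
    filter_upwards [eventually_ge_atTop 2] with k hk
    have hIσ : Complex.I * ((tseq k : ℂ) * (-Complex.I)) = (tseq k : ℂ) := by
      linear_combination (-(tseq k : ℂ)) * Complex.I_sq
    rw [hIσ]
    have hcast : ((2 * π / Real.sqrt 3 * ((k:ℝ) - 1/2) : ℝ) : ℂ) = ((aa k : ℝ) : ℂ) := by
      rw [aa]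
    rw [hcast, ← Complex.ofReal_sub, Complex.norm_real]
    have h1 : ‖tseq k - aa k‖ ≤ ee k := by
      rw [Real.norm_eq_abs]; exact htnear k hk
    have h2 : ee k = 6 * Real.exp dd * Real.exp (-(k:ℝ) * π * Real.sqrt 3 / 3) := by
      rw [ee, exp_arg, Real.exp_add]
      rw [show -((k:ℝ) * π * Real.sqrt 3 / 3) = -(k:ℝ) * π * Real.sqrt 3 / 3 by ring]
      ring
    rw [Real.norm_eq_abs (Real.exp _), abs_of_pos (Real.exp_pos _)]
    linarith [h1, h2.le]
end

section
/- Let ω = e^{2πi/3} and let σ be purely imaginary with Im(σ) > 0 and e^{iσ} + ωe^{iωσ} + ω²e^{iω²σ} = 0. Then the eigenfunctions φ(x) = Σ_{r=0}^{2} e^{iω^rσx}(e^{iω^{r+2}σ} − e^{iω^{r+1}σ}) and ψ(x) = Σ_{r=0}^{2} e^{-iω^rσx}(e^{-iω^{r+2}σ} − e^{-iω^{r+1}σ}) satisfy the reflection-conjugation relation conj(ψ(1−x)) = C·φ(x) for all x ∈ [0,1], for some nonzero constant C depending only on σ. -/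
open scoped Real

theorem stmt19 (ω σ : ℂ) (hω : ω = Complex.exp (2 * π * Complex.I / 3))
    (hσre : σ.re = 0) (hσim : 0 < σ.im)
    (hzero : Complex.exp (Complex.I * σ) + ω * Complex.exp (Complex.I * ω * σ)
      + ω ^ 2 * Complex.exp (Complex.I * ω ^ 2 * σ) = 0)
    (φ ψ : ℝ → ℂ)
    (hφ : ∀ x : ℝ, φ x = ∑ r ∈ Finset.range 3,
      Complex.exp (Complex.I * ω ^ r * σ * x) *
        (Complex.exp (Complex.I * ω ^ (r + 2) * σ) - Complex.exp (Complex.I * ω ^ (r + 1) * σ)))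
    (hψ : ∀ x : ℝ, ψ x = ∑ r ∈ Finset.range 3,
      Complex.exp (-Complex.I * ω ^ r * σ * x) *
        (Complex.exp (-Complex.I * ω ^ (r + 2) * σ) - Complex.exp (-Complex.I * ω ^ (r + 1) * σ))) :
    ∃ C : ℂ, C ≠ 0 ∧ ∀ x ∈ Set.Icc (0:ℝ) 1, (starRingEnd ℂ) (ψ (1 - x)) = C * φ x := by
  have hω3 : ω ^ 3 = 1 := by
    rw [hω, ← Complex.exp_nat_mul]
    rw [show (3:ℕ) * (2 * (π:ℂ) * Complex.I / 3) = 2 * π * Complex.I by push_cast; ring]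
    exact Complex.exp_two_pi_mul_I
  have hω0 : ω ≠ 0 := by
    intro h; rw [h] at hω3; norm_num at hω3
  have hω1 : ω ≠ 1 := by
    rw [hω, Ne, Complex.exp_eq_one_iff]
    rintro ⟨n, hn⟩
    have hne : (2:ℂ) * π * Complex.I ≠ 0 := by
      simp [Complex.I_ne_zero, Real.pi_ne_zero, Complex.ofReal_ne_zero]
    have h3 : ((3 * n : ℤ) : ℂ) = 1 := by
      have hmul : ((3 * n : ℤ) : ℂ) * (2 * π * Complex.I) = 1 * (2 * π * Complex.I) := by
        push_cast
        linear_combination (-3) * hn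
      exact mul_right_cancel₀ hne hmul
    have : (3 * n : ℤ) = 1 := by exact_mod_cast h3
    omega
  have hsum : 1 + ω + ω ^ 2 = 0 := by
    have h : (ω - 1) * (1 + ω + ω ^ 2) = 0 := by linear_combination hω3
    rcases mul_eq_zero.mp h with h' | h'
    · exact absurd (sub_eq_zero.mp h') hω1
    · exact h'
  have hcω : (starRingEnd ℂ) ω = ω ^ 2 := by
    have habs : ‖ω‖ = 1 := by rw [hω, Complex.norm_exp]; simp
    have h1 : (starRingEnd ℂ) ω * ω = 1 := by
      rw [mul_comm, Complex.mul_conj]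
      norm_cast
      rw [Complex.normSq_eq_norm_sq, habs]; norm_num
    have h2 : ω ^ 2 * ω = 1 := by rw [← pow_succ]; exact hω3
    exact mul_right_cancel₀ hω0 (h1.trans h2.symm)
  have hcσ : (starRingEnd ℂ) σ = -σ := by
    apply Complex.ext <;> simp [hσre]
  have h4 : ω ^ 4 = ω := by linear_combination ω * hω3
  have h6 : ω ^ 6 = 1 := by linear_combination (ω ^ 3 + 1) * hω3
  have h8 : ω ^ 8 = ω ^ 2 := by linear_combination (ω ^ 5 + ω ^ 2) * hω3
  refine ⟨1, one_ne_zero, fun x _ => ?_⟩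
  rw [one_mul, hψ, hφ]
  simp only [Finset.sum_range_succ, Finset.sum_range_zero, zero_add, map_add, map_mul, map_sub,
    ← Complex.exp_conj, map_neg, Complex.conj_I, map_pow, hcω, hcσ, Complex.ofReal_sub,
    Complex.ofReal_one, map_one, Complex.conj_ofReal, neg_neg, pow_zero, pow_one, one_mul,
    ← pow_mul]
  norm_num [h4, h6, h8, hω3]
  have mulexp : ∀ A B C D : ℂ, A + B = C + D →
      Complex.exp A * Complex.exp B = Complex.exp C * Complex.exp D := by
    intro A B C D h
    rw [← Complex.exp_add, ← Complex.exp_add, h]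
  have k1 := mulexp (-(Complex.I * σ * (1 - (x:ℂ)))) (-(Complex.I * ω * σ))
    (Complex.I * σ * x) (Complex.I * ω ^ 2 * σ) (by linear_combination (-(Complex.I * σ)) * hsum)
  have k2 := mulexp (-(Complex.I * σ * (1 - (x:ℂ)))) (-(Complex.I * ω ^ 2 * σ))
    (Complex.I * σ * x) (Complex.I * ω * σ) (by linear_combination (-(Complex.I * σ)) * hsum)
  have k3 := mulexp (-(Complex.I * ω ^ 2 * σ * (1 - (x:ℂ)))) (-(Complex.I * σ))
    (Complex.I * ω ^ 2 * σ * x) (Complex.I * ω * σ) (by linear_combination (-(Complex.I * σ)) * hsum)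
  have k4 := mulexp (-(Complex.I * ω ^ 2 * σ * (1 - (x:ℂ)))) (-(Complex.I * ω * σ))
    (Complex.I * ω ^ 2 * σ * x) (Complex.I * σ) (by linear_combination (-(Complex.I * σ)) * hsum)
  have k5 := mulexp (-(Complex.I * ω * σ * (1 - (x:ℂ)))) (-(Complex.I * ω ^ 2 * σ))
    (Complex.I * ω * σ * x) (Complex.I * σ) (by linear_combination (-(Complex.I * σ)) * hsum)
  have k6 := mulexp (-(Complex.I * ω * σ * (1 - (x:ℂ)))) (-(Complex.I * σ))
    (Complex.I * ω * σ * x) (Complex.I * ω ^ 2 * σ) (by linear_combination (-(Complex.I * σ)) * hsum)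
  linear_combination k1 - k2 + k3 - k4 + k5 - k6
end
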